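/- arXiv:1407.5929 — 5 statements merged into one kernel-verified Lean document; each statement's English description precedes it below -/
import Mathlib

section
/- Let n ≥ 2 and let Ω ⊆ ℝⁿ be a bounded domain. For every ε > 0 there exists δ > 0 such that any pair of points x₁, x₂ ∈ Ω with dist(xᵢ, ∂Ω) ≥ ε (equivalently, dist(xᵢ, Ωᶜ) ≥ ε) are joined by a δ-tube, i.e. there is a continuous path ξ:[0,1]→Ω with ξ(0)=x₁, ξ(1)=x₂ and the closed ball of radius δ around ξ(t) contained in Ω for all t ∈ [0,1]. -/
open MeasureTheory Matrix Pointwise ENNReal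

noncomputable section

namespace Incompat

/-- The rotation group `SO(n)` as a set of `n × n` real matrices. -/
def SO (n : ℕ) : Set (Matrix (Fin n) (Fin n) ℝ) :=
  {Q | Qᵀ * Q = 1 ∧ Q.det = 1}

/-- The image of a set `S ⊆ ℝⁿ` under the rigid motion `x ↦ ξ + Q x`. -/
def rigidImage {n : ℕ} (ξ : EuclideanSpace ℝ (Fin n)) (Q : Matrix (Fin n) (Fin n) ℝ)
    (S : Set (EuclideanSpace ℝ (Fin n))) : Set (EuclideanSpace ℝ (Fin n)) :=
  (fun x => ξ + Matrix.toEuclideanLin Q x) '' S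

/-- `C₁`, `C₂` are congruently connected in `Ω` as rigid copies of `C`. -/
def CongrConn {n : ℕ} (Ω C C₁ C₂ : Set (EuclideanSpace ℝ (Fin n))) : Prop :=
  ∃ ξ : ℝ → EuclideanSpace ℝ (Fin n), ∃ Q : ℝ → Matrix (Fin n) (Fin n) ℝ,
    ContinuousOn ξ (Set.Icc 0 1) ∧ ContinuousOn Q (Set.Icc 0 1) ∧
    (∀ t ∈ Set.Icc (0:ℝ) 1, Q t ∈ SO n) ∧
    C₁ = rigidImage (ξ 0) (Q 0) C ∧ C₂ = rigidImage (ξ 1) (Q 1) C ∧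
    ∀ t ∈ Set.Icc (0:ℝ) 1, rigidImage (ξ t) (Q t) C ⊆ Ω

/-- `Ω` is `C`-filled: every point of `Ω` lies in a subset of `Ω` directly congruent to `C`. -/
def IsCFilled {n : ℕ} (Ω C : Set (EuclideanSpace ℝ (Fin n))) : Prop :=
  ∀ x ∈ Ω, ∃ ξ Q, Q ∈ SO n ∧ x ∈ rigidImage ξ Q C ∧ rigidImage ξ Q C ⊆ Ω

/-- `Ω` is `C`-connected: some family of pairwise congruently connected rigid copies of `C`
inside `Ω` (an equivalence class of `∼`) covers `Ω`. -/
def IsCConnected {n : ℕ} (Ω C : Set (EuclideanSpace ℝ (Fin n))) : Prop :=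
  ∃ 𝒞 : Set (Set (EuclideanSpace ℝ (Fin n))),
    (∀ D ∈ 𝒞, D ⊆ Ω) ∧
    (∀ D₁ ∈ 𝒞, ∀ D₂ ∈ 𝒞, CongrConn Ω C D₁ D₂) ∧
    Ω ⊆ ⋃₀ 𝒞

/-- The Frobenius norm of a matrix. -/
def frobNorm {m n : ℕ} (A : Matrix (Fin m) (Fin n) ℝ) : ℝ :=
  Real.sqrt (∑ i, ∑ j, (A i j) ^ 2)

/-- `N_ε(K)`: the closed `ε`-neighbourhood of `K` in the Frobenius norm. -/
def Nbhd {m n : ℕ} (K : Set (Matrix (Fin m) (Fin n) ℝ)) (ε : ℝ) :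
    Set (Matrix (Fin m) (Fin n) ℝ) :=
  {A | ∃ B ∈ K, frobNorm (A - B) ≤ ε}

/-- The (a.e.-defined) gradient of `y` at `x`, as a matrix: `(Dy)ᵢⱼ = ∂yᵢ/∂xⱼ`. -/
def Dmat {m n : ℕ} (y : EuclideanSpace ℝ (Fin n) → EuclideanSpace ℝ (Fin m))
    (x : EuclideanSpace ℝ (Fin n)) : Matrix (Fin m) (Fin n) ℝ :=
  Matrix.of fun i j => fderiv ℝ y x (EuclideanSpace.single j 1) i

/-- The matrix `A` regarded as a continuous linear map `ℝⁿ → ℝᵐ`. -/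
def toCLM {m n : ℕ} (A : Matrix (Fin m) (Fin n) ℝ) :
    EuclideanSpace ℝ (Fin n) →L[ℝ] EuclideanSpace ℝ (Fin m) :=
  LinearMap.toContinuousLinearMap (Matrix.toEuclideanLin A)

/-- `Ω_{K,ε}(y) = {x ∈ Ω : Dy(x) ∈ N_ε(K)}`. -/
def phaseSet {m n : ℕ} (Ω : Set (EuclideanSpace ℝ (Fin n)))
    (y : EuclideanSpace ℝ (Fin n) → EuclideanSpace ℝ (Fin m))
    (K : Set (Matrix (Fin m) (Fin n) ℝ)) (ε : ℝ) : Set (EuclideanSpace ℝ (Fin n)) :=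
  {x ∈ Ω | Dmat y x ∈ Nbhd K ε}

/-- The transition layer `T_ε(y) = {x ∈ Ω : Dy(x) ∉ N_ε(K₁) ∪ N_ε(K₂)}`. -/
def transLayer {m n : ℕ} (Ω : Set (EuclideanSpace ℝ (Fin n)))
    (y : EuclideanSpace ℝ (Fin n) → EuclideanSpace ℝ (Fin m))
    (K₁ K₂ : Set (Matrix (Fin m) (Fin n) ℝ)) (ε : ℝ) : Set (EuclideanSpace ℝ (Fin n)) :=
  {x ∈ Ω | Dmat y x ∉ Nbhd K₁ ε ∪ Nbhd K₂ ε}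

/-- `x.toENNReal` for `x : EReal` (not yet in this Mathlib version). -/
def erealToENNReal (x : EReal) : ℝ≥0∞ :=
  if x = ⊤ then ⊤ else ENNReal.ofReal x.toReal

/-- The integral of an `ℝ ∪ {±∞}`-valued function `g` over `G`, defined as the difference of the
lower integrals of the positive and negative parts (well defined, with value in `ℝ ∪ {+∞}`,
whenever the negative part has finite integral, e.g. when `g` is bounded below and `G` has
finite measure). -/
def eintegral {n : ℕ} (G : Set (EuclideanSpace ℝ (Fin n)))
    (g : EuclideanSpace ℝ (Fin n) → EReal) : EReal :=
  ((∫⁻ x in G, erealToENNReal (g x)) : ℝ≥0∞) -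
    (((∫⁻ x in G, erealToENNReal (-(g x))) : ℝ≥0∞) : EReal)

/-- The outer radius `R(C)`. -/
def outerRad {n : ℕ} (C : Set (EuclideanSpace ℝ (Fin n))) : ℝ :=
  sInf {ρ : ℝ | 0 < ρ ∧ ∃ a, C ⊆ Metric.ball a ρ}

/-- The inner radius `r(C)`. -/
def innerRad {n : ℕ} (C : Set (EuclideanSpace ℝ (Fin n))) : ℝ :=
  sSup {ρ : ℝ | 0 < ρ ∧ ∃ a, Metric.ball a ρ ⊆ C}

/-- The eccentricity `E(C) = √(1 − r(C)²/R(C)²)`. -/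
def eccentricity {n : ℕ} (C : Set (EuclideanSpace ℝ (Fin n))) : ℝ :=
  Real.sqrt (1 - innerRad C ^ 2 / outerRad C ^ 2)

end Incompat

open Incompat NNReal Bornology

section Seg
variable {E : Type*} [NormedAddCommGroup E] [NormedSpace ℝ E]

/-- Straight-line path from `a` to `b`. -/
def segPath (a b : E) : Path a b where
  toFun u := (1 - (u : ℝ)) • a + (u : ℝ) • b
  continuous_toFun := by fun_prop
  source' := by simp
  target' := by simp

lemma segPath_dist_left (a b : E) (u : unitInterval) :
    dist (segPath a b u) a ≤ dist a b := by
  have h : segPath a b u - a = (u : ℝ) • (b - a) := by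
    simp [segPath, sub_smul, smul_sub, one_smul]; abel
  rw [dist_eq_norm, h, norm_smul]
  have h0 : (0:ℝ) ≤ (u:ℝ) := u.2.1
  have h1 : (u:ℝ) ≤ 1 := u.2.2
  calc ‖(u:ℝ)‖ * ‖b - a‖ ≤ 1 * ‖b - a‖ := by
        apply mul_le_mul_of_nonneg_right _ (norm_nonneg _)
        rw [Real.norm_eq_abs, abs_of_nonneg h0]; exact h1
    _ = dist a b := by rw [one_mul, dist_eq_norm, norm_sub_rev]

lemma segPath_dist_right (a b : E) (u : unitInterval) :
    dist (segPath a b u) b ≤ dist a b := by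
  have h : segPath a b u - b = (1 - (u : ℝ)) • (a - b) := by
    simp [segPath, sub_smul, smul_sub, one_smul]; abel
  rw [dist_eq_norm, h, norm_smul]
  have h0 : (0:ℝ) ≤ 1 - (u:ℝ) := by have := u.2.2; linarith
  calc ‖(1-(u:ℝ))‖ * ‖a - b‖ ≤ 1 * ‖a - b‖ := by
        apply mul_le_mul_of_nonneg_right _ (norm_nonneg _)
        rw [Real.norm_eq_abs, abs_of_nonneg h0]; have := u.2.1; linarith
    _ = dist a b := by rw [one_mul, dist_eq_norm]
end Seg

set_option maxHeartbeats 1000000 in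
/-- the tube lemma. In a bounded domain `Ω ⊆ ℝⁿ`, for every `ε > 0` there is a
`δ > 0` such that any two points at distance `≥ ε` from the complement of `Ω` are joined by a
`δ`-tube. -/
theorem tube_lemma
    (n : ℕ) (hn : 2 ≤ n) (Ω : Set (EuclideanSpace ℝ (Fin n)))
    (hΩopen : IsOpen Ω) (hΩconn : IsConnected Ω) (hΩbdd : IsBounded Ω)
    (ε : ℝ) (hε : 0 < ε) :
    ∃ δ > (0:ℝ), ∀ x₁ ∈ Ω, ∀ x₂ ∈ Ω,
      ε ≤ Metric.infDist x₁ Ωᶜ → ε ≤ Metric.infDist x₂ Ωᶜ →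
      ∃ ξ : ℝ → EuclideanSpace ℝ (Fin n),
        ContinuousOn ξ (Set.Icc 0 1) ∧ ξ 0 = x₁ ∧ ξ 1 = x₂ ∧
        (∀ t ∈ Set.Icc (0:ℝ) 1, ξ t ∈ Ω) ∧
        (∀ t ∈ Set.Icc (0:ℝ) 1, Metric.closedBall (ξ t) δ ⊆ Ω) := by
  classical
  -- Ωᶜ is nonempty
  obtain ⟨R, hR⟩ := hΩbdd.subset_closedBall 0
  have hcompl : Ωᶜ.Nonempty := by
    refine ⟨EuclideanSpace.single ⟨0, by omega⟩ (|R| + 1), fun hmem => ?_⟩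
    have h1 := hR hmem
    rw [Metric.mem_closedBall, dist_zero_right, EuclideanSpace.norm_single] at h1
    have : |R| + 1 ≤ R := le_trans (le_abs_self _) h1
    have := abs_nonneg R
    have := le_abs_self R
    linarith [abs_of_nonneg (show (0:ℝ) ≤ |R| + 1 by positivity)]
  have hcomplclosed : IsClosed Ωᶜ := hΩopen.isClosed_compl
  -- the compact core K
  set K : Set (EuclideanSpace ℝ (Fin n)) := {x | ε ≤ Metric.infDist x Ωᶜ} with hK
  have hKΩ : K ⊆ Ω := by
    intro x hx
    by_contra hxΩ
    have : Metric.infDist x Ωᶜ = 0 := Metric.infDist_zero_of_mem hxΩ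
    rw [hK] at hx; simp only [Set.mem_setOf_eq] at hx; linarith
  have hKclosed : IsClosed K :=
    isClosed_le continuous_const (Metric.continuous_infDist_pt _)
  have hKcomp : IsCompact K :=
    Metric.isCompact_of_isClosed_isBounded hKclosed (hΩbdd.subset hKΩ)
  -- finite ε/2-net of K
  obtain ⟨t, htK, htfin, htcover⟩ := hKcomp.finite_cover_balls (show (0:ℝ) < ε/2 by linarith)
  set s : Finset (EuclideanSpace ℝ (Fin n)) := htfin.toFinset with hs
  have hst : ∀ c ∈ s, c ∈ t := fun c hc => htfin.mem_toFinset.mp hc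
  -- Ω is path connected
  have hpc : IsPathConnected Ω := hΩopen.isConnected_iff_isPathConnected.mp hΩconn
  -- for each joined pair, minimal distance to the complement along the chosen path
  set f : EuclideanSpace ℝ (Fin n) × EuclideanSpace ℝ (Fin n) → ℝ := fun p =>
    if h : JoinedIn Ω p.1 p.2 then
      sInf ((fun z => Metric.infDist z Ωᶜ) '' Set.range h.somePath) else 1
    with hf
  have key : ∀ (a b : EuclideanSpace ℝ (Fin n)) (h : JoinedIn Ω a b),
      0 < f (a, b) ∧ ∀ u : unitInterval, f (a, b) ≤ Metric.infDist (h.somePath u) Ωᶜ := by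
    intro a b h
    have hcomp : IsCompact (Set.range h.somePath) := isCompact_range h.somePath.continuous
    obtain ⟨z₀, hz₀mem, hz₀min⟩ := hcomp.exists_isMinOn ⟨h.somePath 0, Set.mem_range_self 0⟩
      ((Metric.continuous_infDist_pt Ωᶜ).continuousOn)
    have hleast : IsLeast ((fun z => Metric.infDist z Ωᶜ) '' Set.range h.somePath)
        (Metric.infDist z₀ Ωᶜ) := by
      refine ⟨⟨z₀, hz₀mem, rfl⟩, ?_⟩
      rintro y ⟨z, hz, rfl⟩
      exact hz₀min hz
    have hval : f (a, b) = Metric.infDist z₀ Ωᶜ := by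
      rw [hf]; simp only [dif_pos h]
      exact hleast.csInf_eq
    constructor
    · rw [hval]
      obtain ⟨u, rfl⟩ := hz₀mem
      exact (hcomplclosed.notMem_iff_infDist_pos hcompl).mp
        (by simpa using h.somePath_mem u)
    · intro u
      rw [hval]
      exact hz₀min (Set.mem_range_self u)
  by_cases hsne : s.Nonempty
  · -- main case
    set δ₀ : ℝ := (s ×ˢ s).inf' (hsne.product hsne) f with hδ₀
    have hjoin : ∀ p ∈ s ×ˢ s, JoinedIn Ω p.1 p.2 := by
      intro p hp
      rw [Finset.mem_product] at hp
      exact hpc.joinedIn p.1 (hKΩ (htK (hst _ hp.1))) p.2 (hKΩ (htK (hst _ hp.2)))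
    have hδ₀pos : 0 < δ₀ := by
      rw [hδ₀, Finset.lt_inf'_iff]
      intro p hp
      have := (key p.1 p.2 (hjoin p hp)).1
      simpa using this
    refine ⟨min (ε/2) δ₀ / 2, by positivity, ?_⟩
    intro x₁ hx₁ x₂ hx₂ h1 h2
    set δ := min (ε/2) δ₀ / 2 with hδ
    have hδε : δ < ε/2 := by
      have : δ ≤ ε/4 := by
        rw [hδ]; have := min_le_left (ε/2) δ₀; linarith
      linarith
    have hδδ₀ : δ < δ₀ := by
      have : δ ≤ δ₀/2 := by
        rw [hδ]; have := min_le_right (ε/2) δ₀; linarith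
      linarith
    -- find net points
    obtain ⟨c₁, hc₁t, hc₁b⟩ : ∃ c ∈ t, x₁ ∈ Metric.ball c (ε/2) := by
      have := htcover h1; simpa using this
    obtain ⟨c₂, hc₂t, hc₂b⟩ : ∃ c ∈ t, x₂ ∈ Metric.ball c (ε/2) := by
      have := htcover h2; simpa using this
    have hc₁s : c₁ ∈ s := htfin.mem_toFinset.mpr hc₁t
    have hc₂s : c₂ ∈ s := htfin.mem_toFinset.mpr hc₂t
    have hj : JoinedIn Ω c₁ c₂ :=
      hpc.joinedIn c₁ (hKΩ (htK hc₁t)) c₂ (hKΩ (htK hc₂t))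
    -- assemble the path
    set γ : Path x₁ x₂ := (Path.trans (segPath x₁ c₁) hj.somePath).trans (segPath c₂ x₂) with hγ
    have hmain : ∀ u : unitInterval, δ < Metric.infDist (γ u) Ωᶜ := by
      intro u
      have hu : γ u ∈ (Set.range (segPath x₁ c₁) ∪ Set.range hj.somePath)
          ∪ Set.range (segPath c₂ x₂) := by
        rw [← Path.trans_range, ← Path.trans_range]
        exact Set.mem_range_self u
      rcases hu with (hu | hu) | hu
      · obtain ⟨v, hv⟩ := hu
        have hd : dist (γ u) x₁ ≤ dist x₁ c₁ := by
          rw [← hv]; exact segPath_dist_left x₁ c₁ v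
        have hLip : Metric.infDist x₁ Ωᶜ ≤ Metric.infDist (γ u) Ωᶜ + dist x₁ (γ u) :=
          Metric.infDist_le_infDist_add_dist
        rw [dist_comm] at hd
        have hdb : dist x₁ c₁ < ε/2 := by rwa [Metric.mem_ball] at hc₁b
        linarith
      · obtain ⟨v, hv⟩ := hu
        have hb := (key c₁ c₂ hj).2 v
        have hle : δ₀ ≤ f (c₁, c₂) :=
          Finset.inf'_le f (Finset.mem_product.mpr ⟨hc₁s, hc₂s⟩)
        rw [hv] at hb
        linarith
      · obtain ⟨v, hv⟩ := hu
        have hd : dist (γ u) x₂ ≤ dist c₂ x₂ := by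
          rw [← hv]; exact segPath_dist_right c₂ x₂ v
        have hLip : Metric.infDist x₂ Ωᶜ ≤ Metric.infDist (γ u) Ωᶜ + dist x₂ (γ u) :=
          Metric.infDist_le_infDist_add_dist
        rw [dist_comm] at hd
        have hdb : dist c₂ x₂ < ε/2 := by
          rw [Metric.mem_ball] at hc₂b; rwa [dist_comm]
        linarith
    refine ⟨γ.extend, γ.continuous_extend.continuousOn, γ.extend_zero, γ.extend_one, ?_, ?_⟩
    · intro r hr
      rw [γ.extend_apply hr]
      by_contra hmem
      have := hmain ⟨r, hr⟩
      have h0 : Metric.infDist (γ ⟨r, hr⟩) Ωᶜ = 0 :=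
        Metric.infDist_zero_of_mem (Set.mem_compl hmem)
      rw [h0] at this
      have hδpos : (0:ℝ) < δ := by rw [hδ]; positivity
      linarith
    · intro r hr w hw
      rw [γ.extend_apply hr] at hw
      by_contra hmem
      have hle := Metric.infDist_le_dist_of_mem (s := Ωᶜ) (x := γ ⟨r, hr⟩) hmem
      have := hmain ⟨r, hr⟩
      rw [Metric.mem_closedBall] at hw
      rw [dist_comm] at hw
      linarith
  · -- degenerate case: K is empty
    refine ⟨1, one_pos, ?_⟩
    intro x₁ hx₁ x₂ hx₂ h1 h2
    exfalso
    have hx₁K : x₁ ∈ K := h1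
    have := htcover hx₁K
    simp only [Set.mem_iUnion] at this
    obtain ⟨c, hc, -⟩ := this
    exact hsne ⟨c, htfin.mem_toFinset.mpr hc⟩
end
end

section
/- Let n ≥ 2, let 0 < α < 1, and set Ωᵅ = B(0,1) ∪ B((2−α)e₁, 1) ⊆ ℝⁿ (open balls) and r_α = √(α − α²/4). Then: (i) Ωᵅ is B(0,1)-filled; (ii) Ωᵅ is B(0,r)-connected for every r with 0 < r ≤ r_α; and (iii) Ωᵅ is not B(0,r)-connected for any r > r_α. -/
open MeasureTheory Matrix Pointwise ENNReal

noncomputable section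

open Incompat NNReal Bornology

section TBAux

variable {n : ℕ}


lemma tb_one_mem_SO : (1 : Matrix (Fin n) (Fin n) ℝ) ∈ SO n := ⟨by simp, by simp⟩

lemma tb_norm_toEucl {Q : Matrix (Fin n) (Fin n) ℝ} (hQ : Qᵀ * Q = 1)
    (x : EuclideanSpace ℝ (Fin n)) : ‖Matrix.toEuclideanLin Q x‖ = ‖x‖ := by
  have h1 : ∀ y : EuclideanSpace ℝ (Fin n),
      ‖y‖^2 = dotProduct (fun i => y i) (fun i => y i) := by
    intro y
    rw [EuclideanSpace.norm_eq, Real.sq_sqrt (by positivity)]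
    simp [dotProduct, pow_two]
  have h2 : ‖Matrix.toEuclideanLin Q x‖^2 = ‖x‖^2 := by
    rw [h1, h1]
    have h3 : (fun i => (Matrix.toEuclideanLin Q x) i) = Q.mulVec (fun i => x i) := by
      rw [Matrix.toEuclideanLin_apply]
    rw [h3, Matrix.dotProduct_mulVec, ← Matrix.vecMul_transpose, Matrix.vecMul_vecMul, hQ,
      Matrix.vecMul_one]
  nlinarith [norm_nonneg (Matrix.toEuclideanLin Q x), norm_nonneg x]

lemma tb_rigid_ball {Q : Matrix (Fin n) (Fin n) ℝ} (hQ : Q ∈ SO n)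
    (ξ : EuclideanSpace ℝ (Fin n)) (ρ : ℝ) :
    rigidImage ξ Q (Metric.ball 0 ρ) = Metric.ball ξ ρ := by
  have hQ' : Q * Qᵀ = 1 := mul_eq_one_comm.mp hQ.1
  have hQt : (Qᵀ)ᵀ * Qᵀ = 1 := by rw [Matrix.transpose_transpose]; exact hQ'
  ext y
  constructor
  · rintro ⟨x, hx, rfl⟩
    rw [Metric.mem_ball, dist_eq_norm, add_sub_cancel_left, tb_norm_toEucl hQ.1]
    simpa [dist_eq_norm] using hx
  · intro hy
    refine ⟨Matrix.toEuclideanLin Qᵀ (y - ξ), ?_, ?_⟩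
    · rw [Metric.mem_ball, dist_zero_right, tb_norm_toEucl hQt]
      rw [Metric.mem_ball, dist_eq_norm] at hy
      exact hy
    · have h4 : Matrix.toEuclideanLin Q (Matrix.toEuclideanLin Qᵀ (y - ξ)) = y - ξ := by
        ext i
        rw [Matrix.toEuclideanLin_apply, Matrix.toEuclideanLin_apply]
        have h5 : (WithLp.equiv 2 (Fin n → ℝ))
            ((WithLp.equiv 2 (Fin n → ℝ)).symm (Qᵀ *ᵥ (WithLp.equiv 2 (Fin n → ℝ)) (y - ξ)))
            = Qᵀ *ᵥ (WithLp.equiv 2 (Fin n → ℝ)) (y - ξ) := by simp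
        simp only [WithLp.ofLp_toLp, Matrix.mulVec_mulVec, hQ', Matrix.one_mulVec]
      show ξ + Matrix.toEuclideanLin Q (Matrix.toEuclideanLin Qᵀ (y - ξ)) = y
      rw [h4]; abel

lemma tb_seg_joined (S : Set (EuclideanSpace ℝ (Fin n))) (a b : EuclideanSpace ℝ (Fin n))
    (h : ∀ t ∈ Set.Icc (0:ℝ) 1, (1 - t) • a + t • b ∈ S) : JoinedIn S a b := by
  refine ⟨⟨⟨fun t => (1 - (t:ℝ)) • a + (t:ℝ) • b, by continuity⟩, by norm_num, by norm_num⟩,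
    fun t => h t ⟨t.2.1, t.2.2⟩⟩

lemma tb_coord_abs_le (x : EuclideanSpace ℝ (Fin n)) (i : Fin n) : |x i| ≤ ‖x‖ := by
  have := abs_real_inner_le_norm x (EuclideanSpace.single i 1)
  rw [EuclideanSpace.inner_single_right] at this
  simpa using this

lemma tb_norm_sq_sub_smul (i0 : Fin n) (y : EuclideanSpace ℝ (Fin n)) (t : ℝ) :
    ‖y - t • EuclideanSpace.single i0 (1:ℝ)‖^2 = ‖y‖^2 - 2*(t * y i0) + t^2 := by
  rw [norm_sub_sq_real, real_inner_smul_right, EuclideanSpace.inner_single_right,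
    norm_smul, EuclideanSpace.norm_single]
  simp [mul_pow, sq_abs]

lemma tb_axis_ball_subset (i0 : Fin n) {α : ℝ} (hα0 : 0 < α) (hα1 : α < 1)
    {t r : ℝ} (ht0 : 0 ≤ t) (htd : t ≤ 2 - α) (hr : r^2 ≤ α - α^2/4) :
    Metric.ball (t • EuclideanSpace.single i0 (1:ℝ)) r ⊆
      Metric.ball (0 : EuclideanSpace ℝ (Fin n)) 1 ∪
      Metric.ball ((2 - α) • EuclideanSpace.single i0 (1:ℝ)) 1 := by
  intro y hy
  rw [Metric.mem_ball, dist_eq_norm] at hy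
  have hy2 : ‖y - t • EuclideanSpace.single i0 (1:ℝ)‖^2 < r^2 := by
    nlinarith [norm_nonneg (y - t • EuclideanSpace.single i0 (1:ℝ))]
  rw [tb_norm_sq_sub_smul] at hy2
  by_cases h : y i0 ≤ (2 - α)/2
  · left
    rw [Metric.mem_ball, dist_zero_right]
    nlinarith [norm_nonneg y, sq_nonneg (t - (2-α)/2),
      mul_nonneg ht0 (by linarith : (0:ℝ) ≤ (2-α) - 2 * y i0)]
  · right
    rw [Metric.mem_ball, dist_eq_norm]
    push_neg at h
    have key : ‖y - (2-α) • EuclideanSpace.single i0 (1:ℝ)‖^2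
        = ‖y‖^2 - 2*((2-α) * y i0) + (2-α)^2 := tb_norm_sq_sub_smul i0 y (2-α)
    nlinarith [norm_nonneg (y - (2-α) • EuclideanSpace.single i0 (1:ℝ)),
      sq_nonneg (t - (2-α)/2),
      mul_nonneg (by linarith : (0:ℝ) ≤ (2-α) - t) (by linarith : (0:ℝ) ≤ 2 * y i0 - (2-α))]

lemma tb_cover_ball (b x : EuclideanSpace ℝ (Fin n)) (hx : x ∈ Metric.ball b 1)
    {r : ℝ} (hr0 : 0 < r) (hr1 : r ≤ 1) :
    ∃ a, dist a b ≤ 1 - r ∧ x ∈ Metric.ball a r := by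
  rw [Metric.mem_ball] at hx
  by_cases h : dist x b ≤ 1 - r
  · exact ⟨x, by rwa [dist_comm] at h ⊢, Metric.mem_ball_self hr0⟩
  · push_neg at h
    have hD : 0 < dist x b := by linarith
    set D := dist x b with hDdef
    refine ⟨b + ((1 - r)/D) • (x - b), ?_, ?_⟩
    · rw [dist_eq_norm, add_sub_cancel_left, norm_smul, Real.norm_eq_abs,
        abs_of_nonneg (div_nonneg (by linarith) hD.le), ← dist_eq_norm]
      rw [div_mul_cancel₀ _ (ne_of_gt hD)]
    · rw [Metric.mem_ball, dist_eq_norm]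
      have heq : x - (b + ((1 - r)/D) • (x - b)) = (1 - (1 - r)/D) • (x - b) := by
        rw [sub_smul, one_smul]; abel
      rw [heq, norm_smul, Real.norm_eq_abs]
      have hlt : (1 - r)/D < 1 := (div_lt_one hD).mpr h
      rw [abs_of_nonneg (by linarith), ← dist_eq_norm]
      have : (1 - (1 - r) / D) * D = D - (1 - r) := by field_simp
      rw [this]; linarith

lemma tb_part2 (i0 : Fin n) {α : ℝ} (hα0 : 0 < α) (hα1 : α < 1) {r : ℝ}
    (hr0 : 0 < r) (hrα : r ≤ Real.sqrt (α - α ^ 2 / 4)) :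
    IsCConnected (Metric.ball (0 : EuclideanSpace ℝ (Fin n)) 1 ∪
        Metric.ball ((2 - α) • EuclideanSpace.single i0 (1:ℝ)) 1)
      (Metric.ball (0 : EuclideanSpace ℝ (Fin n)) r) := by
  set e₁ : EuclideanSpace ℝ (Fin n) := EuclideanSpace.single i0 (1:ℝ) with he₁
  set c : EuclideanSpace ℝ (Fin n) := (2 - α) • e₁ with hc
  set Ω : Set (EuclideanSpace ℝ (Fin n)) := Metric.ball 0 1 ∪ Metric.ball c 1 with hΩ
  have harg : (0:ℝ) ≤ α - α ^ 2 / 4 := by nlinarith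
  have hr2 : r^2 ≤ α - α^2/4 := by
    nlinarith [Real.sq_sqrt harg, Real.sqrt_nonneg (α - α ^ 2 / 4)]
  have hr1 : r ≤ 1 := by nlinarith
  set S : Set (EuclideanSpace ℝ (Fin n)) := {a | Metric.ball a r ⊆ Ω} with hS
  have hcb0 : ∀ a : EuclideanSpace ℝ (Fin n), dist a (0:EuclideanSpace ℝ (Fin n)) ≤ 1 - r → a ∈ S := by
    intro a ha
    exact fun y hy => Set.mem_union_left _ (Metric.ball_subset_ball' (by linarith) hy)
  have hcbc : ∀ a : EuclideanSpace ℝ (Fin n), dist a c ≤ 1 - r → a ∈ S := by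
    intro a ha
    exact fun y hy => Set.mem_union_right _ (Metric.ball_subset_ball' (by linarith) hy)
  have haxis : ∀ t : ℝ, 0 ≤ t → t ≤ 2 - α → (t • e₁) ∈ S := by
    intro t ht0 htd
    exact tb_axis_ball_subset i0 hα0 hα1 ht0 htd hr2
  have hjoin0 : ∀ a : EuclideanSpace ℝ (Fin n), dist a 0 ≤ 1 - r → JoinedIn S a 0 := by
    intro a ha
    apply tb_seg_joined
    intro t ht
    apply hcb0
    rw [smul_zero, add_zero, dist_zero_right, norm_smul, Real.norm_eq_abs,
      abs_of_nonneg (by linarith [ht.2] : (0:ℝ) ≤ 1 - t)]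
    rw [dist_zero_right] at ha
    nlinarith [ht.1, ht.2, norm_nonneg a]
  have hjoinaxis : ∀ t0 : ℝ, 0 ≤ t0 → t0 ≤ 2 - α → JoinedIn S (t0 • e₁) 0 := by
    intro t0 ht0 htd
    apply tb_seg_joined
    intro t ht
    rw [smul_zero, add_zero, smul_smul]
    exact haxis _ (mul_nonneg (by linarith [ht.2]) ht0)
      (by nlinarith [ht.1, ht.2])
  have hjoinc : ∀ a : EuclideanSpace ℝ (Fin n), dist a c ≤ 1 - r → JoinedIn S a 0 := by
    intro a ha
    have h1 : JoinedIn S a c := by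
      apply tb_seg_joined
      intro t ht
      apply hcbc
      have heq : (1 - t) • a + t • c - c = (1 - t) • (a - c) := by module
      rw [dist_eq_norm, heq, norm_smul, Real.norm_eq_abs,
        abs_of_nonneg (by linarith [ht.2] : (0:ℝ) ≤ 1 - t), ← dist_eq_norm]
      nlinarith [ht.1, ht.2, dist_nonneg (x := a) (y := c)]
    exact h1.trans (hjoinaxis (2 - α) (by linarith) le_rfl)
  refine ⟨{D | ∃ a ∈ S, JoinedIn S a 0 ∧ D = Metric.ball a r}, ?_, ?_, ?_⟩
  · rintro D ⟨a, haS, -, rfl⟩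
    exact haS
  · rintro D₁ ⟨a, haS, haJ, rfl⟩ D₂ ⟨b, hbS, hbJ, rfl⟩
    obtain ⟨γ, hγ⟩ := haJ.trans hbJ.symm
    refine ⟨γ.extend, fun _ => 1, γ.continuous_extend.continuousOn, continuousOn_const,
      fun t _ => tb_one_mem_SO, ?_, ?_, ?_⟩
    · rw [tb_rigid_ball tb_one_mem_SO, Path.extend_zero]
    · rw [tb_rigid_ball tb_one_mem_SO, Path.extend_one]
    · intro t ht
      rw [tb_rigid_ball tb_one_mem_SO, Path.extend_apply γ ht]
      exact hγ ⟨t, ht⟩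
  · intro x hx
    rcases hx with hx | hx
    · obtain ⟨a, ha, hxa⟩ := tb_cover_ball 0 x hx hr0 hr1
      exact ⟨Metric.ball a r, ⟨a, hcb0 a ha, hjoin0 a ha, rfl⟩, hxa⟩
    · obtain ⟨a, ha, hxa⟩ := tb_cover_ball c x hx hr0 hr1
      exact ⟨Metric.ball a r, ⟨a, hcbc a ha, hjoinc a ha, rfl⟩, hxa⟩

lemma tb_exists_shift (i0 j : Fin n) (hj : j ≠ i0) (ξ : EuclideanSpace ℝ (Fin n))
    {s : ℝ} (hs : 0 ≤ s) :
    ∃ z : EuclideanSpace ℝ (Fin n), dist z ξ = s ∧ ∀ w : ℝ,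
      ‖z - w • EuclideanSpace.single i0 (1:ℝ)‖^2
        = (ξ i0 - w)^2 + (‖ξ - ξ i0 • EuclideanSpace.single i0 (1:ℝ)‖ + s)^2 := by
  set e₁ : EuclideanSpace ℝ (Fin n) := EuclideanSpace.single i0 (1:ℝ) with he₁
  set P : EuclideanSpace ℝ (Fin n) := ξ - ξ i0 • e₁ with hP
  have he₁norm : ‖e₁‖ = 1 := by simp [he₁, EuclideanSpace.norm_single]
  have hinner_e₁ : ∀ x : EuclideanSpace ℝ (Fin n), inner ℝ x e₁ = (x i0 : ℝ) := by
    intro x; rw [he₁, EuclideanSpace.inner_single_right]; simp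
  have hPe : (inner ℝ P e₁ : ℝ) = 0 := by
    rw [hP, inner_sub_left, real_inner_smul_left, hinner_e₁, hinner_e₁]
    have : (e₁ i0 : ℝ) = 1 := by simp [he₁, EuclideanSpace.single_apply]
    rw [this]; ring
  have hPe' : (inner ℝ e₁ P : ℝ) = 0 := by rw [real_inner_comm]; exact hPe
  -- choose v
  obtain ⟨v, hv_norm, hv_e₁, hv_P⟩ :
      ∃ v : EuclideanSpace ℝ (Fin n), ‖v‖ = 1 ∧ (inner ℝ v e₁ : ℝ) = 0 ∧
        (inner ℝ P v : ℝ) = ‖P‖ := by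
    by_cases hP0 : P = 0
    · refine ⟨EuclideanSpace.single j (1:ℝ), by
        simp [EuclideanSpace.norm_single], ?_, by simp [hP0]⟩
      rw [he₁, EuclideanSpace.inner_single_right]
      simp [EuclideanSpace.single_apply, hj.symm]
    · have hPnz : ‖P‖ ≠ 0 := norm_ne_zero_iff.mpr hP0
      refine ⟨‖P‖⁻¹ • P, ?_, ?_, ?_⟩
      · rw [norm_smul, Real.norm_eq_abs, abs_of_nonneg (by positivity),
          inv_mul_cancel₀ hPnz]
      · rw [real_inner_smul_left, hPe]; ring
      · rw [real_inner_smul_right, real_inner_self_eq_norm_sq]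
        field_simp [pow_two]
  refine ⟨ξ + s • v, ?_, ?_⟩
  · rw [dist_eq_norm, add_sub_cancel_left, norm_smul, Real.norm_eq_abs, abs_of_nonneg hs,
      hv_norm, mul_one]
  · intro w
    have hdecomp : ξ + s • v - w • e₁ = (ξ i0 - w) • e₁ + (P + s • v) := by
      rw [sub_smul, hP]; abel
    rw [hdecomp, norm_add_sq_real]
    have h1 : (inner ℝ ((ξ i0 - w) • e₁) (P + s • v) : ℝ) = 0 := by
      have hv_e₁' : (inner ℝ e₁ v : ℝ) = 0 := by rw [real_inner_comm]; exact hv_e₁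
      rw [real_inner_smul_left, inner_add_right, real_inner_smul_right, hPe', hv_e₁']
      ring
    have h2 : ‖P + s • v‖^2 = (‖P‖ + s)^2 := by
      rw [norm_add_sq_real, real_inner_smul_right, hv_P, norm_smul, Real.norm_eq_abs,
        abs_of_nonneg hs, hv_norm]
      ring
    rw [h1, h2, norm_smul, Real.norm_eq_abs, he₁norm]
    rw [mul_one, sq_abs]
    ring

lemma tb_radius_le_one (i0 j : Fin n) (hj : j ≠ i0) {α r : ℝ}
    (ξ : EuclideanSpace ℝ (Fin n))
    (hball : Metric.ball ξ r ⊆ Metric.ball (0 : EuclideanSpace ℝ (Fin n)) 1 ∪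
      Metric.ball ((2 - α) • EuclideanSpace.single i0 (1:ℝ)) 1) : r ≤ 1 := by
  by_contra hcon
  push_neg at hcon
  have hs : (0:ℝ) ≤ (1 + r)/2 := by linarith
  obtain ⟨z, hzdist, hz⟩ := tb_exists_shift i0 j hj ξ hs
  have hzΩ := hball (by rw [Metric.mem_ball, hzdist]; linarith)
  have h0 := hz 0
  have hd := hz (2 - α)
  rw [zero_smul, sub_zero] at h0
  set p := ‖ξ - ξ i0 • EuclideanSpace.single i0 (1:ℝ)‖ with hpdef
  have hp : 0 ≤ p := norm_nonneg _
  have hkey : 1 < (p + (1 + r)/2)^2 := by nlinarith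
  rcases hzΩ with h | h
  · rw [Metric.mem_ball, dist_zero_right] at h
    nlinarith [sq_nonneg (ξ i0), norm_nonneg z]
  · rw [Metric.mem_ball, dist_eq_norm] at h
    nlinarith [sq_nonneg (ξ i0 - (2 - α)),
      norm_nonneg (z - (2 - α) • EuclideanSpace.single i0 (1:ℝ))]

lemma tb_barrier (i0 j : Fin n) (hj : j ≠ i0) {α r : ℝ} (hα0 : 0 < α) (hα1 : α < 1)
    (hr : Real.sqrt (α - α^2/4) < r) (ξ : EuclideanSpace ℝ (Fin n))
    (hξ : ξ i0 = (2 - α)/2)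
    (hball : Metric.ball ξ r ⊆ Metric.ball (0 : EuclideanSpace ℝ (Fin n)) 1 ∪
      Metric.ball ((2 - α) • EuclideanSpace.single i0 (1:ℝ)) 1) : False := by
  set rα := Real.sqrt (α - α^2/4) with hrαdef
  have hrα0 : 0 ≤ rα := Real.sqrt_nonneg _
  have hrα2 : rα^2 = α - α^2/4 := Real.sq_sqrt (by nlinarith)
  set p := ‖ξ - ξ i0 • EuclideanSpace.single i0 (1:ℝ)‖ with hpdef
  have hp : 0 ≤ p := norm_nonneg _
  set s := max 0 (rα - p) with hsdef
  have hs0 : (0:ℝ) ≤ s := le_max_left _ _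
  have hsr : s < r := max_lt (by linarith) (by linarith)
  have hps : rα ≤ p + s := by
    have := le_max_right 0 (rα - p)
    linarith
  obtain ⟨z, hzdist, hz⟩ := tb_exists_shift i0 j hj ξ hs0
  have hzΩ := hball (by rw [Metric.mem_ball, hzdist]; exact hsr)
  have h0 := hz 0
  have hd := hz (2 - α)
  rw [zero_smul, sub_zero] at h0
  have hkey : rα^2 ≤ (p + s)^2 := by nlinarith
  rcases hzΩ with h | h
  · rw [Metric.mem_ball, dist_zero_right] at h
    nlinarith [norm_nonneg z, sq_nonneg (p + s)]
  · rw [Metric.mem_ball, dist_eq_norm] at h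
    nlinarith [norm_nonneg (z - (2 - α) • EuclideanSpace.single i0 (1:ℝ)), sq_nonneg (p + s)]


lemma tb_part3 (i0 j : Fin n) (hj : j ≠ i0) {α r : ℝ} (hα0 : 0 < α) (hα1 : α < 1)
    (hr : Real.sqrt (α - α ^ 2 / 4) < r) :
    ¬ IsCConnected (Metric.ball (0 : EuclideanSpace ℝ (Fin n)) 1 ∪
        Metric.ball ((2 - α) • EuclideanSpace.single i0 (1:ℝ)) 1)
      (Metric.ball (0 : EuclideanSpace ℝ (Fin n)) r) := by
  rintro ⟨𝒞, h𝒞1, h𝒞2, h𝒞3⟩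
  set e₁ : EuclideanSpace ℝ (Fin n) := EuclideanSpace.single i0 (1:ℝ) with he₁
  set c : EuclideanSpace ℝ (Fin n) := (2 - α) • e₁ with hc
  have he₁n : ‖e₁‖ = 1 := by rw [he₁, EuclideanSpace.norm_single, norm_one]
  set xL : EuclideanSpace ℝ (Fin n) := (-((2 - α)/2)) • e₁ with hxLdef
  set xR : EuclideanSpace ℝ (Fin n) := (3*(2 - α)/2) • e₁ with hxRdef
  have hxLΩ : xL ∈ Metric.ball (0 : EuclideanSpace ℝ (Fin n)) 1 ∪ Metric.ball c 1 := by
    left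
    rw [Metric.mem_ball, dist_zero_right, hxLdef, norm_smul, Real.norm_eq_abs, he₁n, mul_one,
      abs_neg, abs_of_nonneg (by linarith)]
    linarith
  have hxRΩ : xR ∈ Metric.ball (0 : EuclideanSpace ℝ (Fin n)) 1 ∪ Metric.ball c 1 := by
    right
    rw [Metric.mem_ball, dist_eq_norm, hxRdef, hc, ← sub_smul]
    have harith : 3*(2 - α)/2 - (2 - α) = (2 - α)/2 := by ring
    rw [harith, norm_smul, Real.norm_eq_abs, he₁n, mul_one, abs_of_nonneg (by linarith)]
    linarith
  obtain ⟨D₁, hD₁, hxL⟩ := h𝒞3 hxLΩ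
  obtain ⟨D₂, hD₂, hxR⟩ := h𝒞3 hxRΩ
  obtain ⟨ξ, Q, hξc, hQc, hQSO, hE1, hE2, hsub⟩ := h𝒞2 D₁ hD₁ D₂ hD₂
  have h01 : (0:ℝ) ∈ Set.Icc (0:ℝ) 1 := by norm_num
  have h11 : (1:ℝ) ∈ Set.Icc (0:ℝ) 1 := by norm_num
  have hb : ∀ t ∈ Set.Icc (0:ℝ) 1, Metric.ball (ξ t) r ⊆
      Metric.ball (0 : EuclideanSpace ℝ (Fin n)) 1 ∪ Metric.ball c 1 := by
    intro t ht
    rw [← tb_rigid_ball (hQSO t ht)]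
    exact hsub t ht
  have hr1' : r ≤ 1 := tb_radius_le_one i0 j hj (ξ 0) (hb 0 h01)
  rw [hE1, tb_rigid_ball (hQSO 0 h01)] at hxL
  rw [hE2, tb_rigid_ball (hQSO 1 h11)] at hxR
  have hco : ∀ (a x : EuclideanSpace ℝ (Fin n)), x ∈ Metric.ball a r → |a i0 - x i0| < r := by
    intro a x hx
    have h1 := tb_coord_abs_le (a - x) i0
    have h2 : (a - x) i0 = a i0 - x i0 := rfl
    rw [h2] at h1
    calc |a i0 - x i0| ≤ ‖a - x‖ := h1
    _ = dist x a := by rw [dist_eq_norm, norm_sub_rev]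
    _ < r := hx
  have hLco := hco (ξ 0) xL hxL
  have hRco := hco (ξ 1) xR hxR
  have hxLi : xL i0 = -((2 - α)/2) := by
    rw [hxLdef, he₁]
    simp [EuclideanSpace.single_apply]
  have hxRi : xR i0 = 3*(2 - α)/2 := by
    rw [hxRdef, he₁]
    simp [EuclideanSpace.single_apply]
  rw [hxLi] at hLco
  rw [hxRi] at hRco
  have hc0 : ξ 0 i0 < (2 - α)/2 := by
    have := (abs_lt.mp hLco).2
    linarith
  have hc1 : (2 - α)/2 < ξ 1 i0 := by
    have := (abs_lt.mp hRco).1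
    linarith
  have hfc : ContinuousOn (fun t => ξ t i0) (Set.Icc (0:ℝ) 1) := by
    have := (EuclideanSpace.proj (𝕜 := ℝ) i0).continuous.comp_continuousOn hξc
    exact this
  obtain ⟨t, ht, hft⟩ := intermediate_value_Icc (by norm_num : (0:ℝ) ≤ 1) hfc
    ⟨hc0.le, hc1.le⟩
  exact tb_barrier i0 j hj hα0 hα1 hr (ξ t) hft (hb t ht)

end TBAux

/-- For `0 < α < 1`, the union `Ωᵅ` of the unit balls centred at `0` and
`(2−α)e₁` is `B(0,1)`-filled, is `B(0,r)`-connected exactly for `0 < r ≤ r_α`, where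
`r_α = √(α − α²/4)`. -/
theorem two_balls_example
    (n : ℕ) (hn : 2 ≤ n) (α : ℝ) (hα0 : 0 < α) (hα1 : α < 1) :
    IsCFilled (Metric.ball (0 : EuclideanSpace ℝ (Fin n)) 1 ∪
        Metric.ball ((2 - α) • EuclideanSpace.single (⟨0, by omega⟩ : Fin n) (1:ℝ)) 1)
      (Metric.ball (0 : EuclideanSpace ℝ (Fin n)) 1) ∧
    (∀ r : ℝ, 0 < r → r ≤ Real.sqrt (α - α ^ 2 / 4) →
      IsCConnected (Metric.ball (0 : EuclideanSpace ℝ (Fin n)) 1 ∪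
          Metric.ball ((2 - α) • EuclideanSpace.single (⟨0, by omega⟩ : Fin n) (1:ℝ)) 1)
        (Metric.ball (0 : EuclideanSpace ℝ (Fin n)) r)) ∧
    (∀ r : ℝ, Real.sqrt (α - α ^ 2 / 4) < r →
      ¬ IsCConnected (Metric.ball (0 : EuclideanSpace ℝ (Fin n)) 1 ∪
          Metric.ball ((2 - α) • EuclideanSpace.single (⟨0, by omega⟩ : Fin n) (1:ℝ)) 1)
        (Metric.ball (0 : EuclideanSpace ℝ (Fin n)) r)) := by
  set i0 : Fin n := (⟨0, by omega⟩ : Fin n) with hi0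
  have hj : (⟨1, by omega⟩ : Fin n) ≠ i0 := by
    rw [hi0]
    intro h
    exact absurd (congrArg Fin.val h) (by norm_num)
  refine ⟨?_, ?_, ?_⟩
  · intro x hx
    rcases hx with hx | hx
    · refine ⟨0, 1, tb_one_mem_SO, ?_, ?_⟩
      · rw [tb_rigid_ball tb_one_mem_SO]; exact hx
      · rw [tb_rigid_ball tb_one_mem_SO]; exact Set.subset_union_left
    · refine ⟨(2 - α) • EuclideanSpace.single i0 (1:ℝ), 1, tb_one_mem_SO, ?_, ?_⟩
      · rw [tb_rigid_ball tb_one_mem_SO]; exact hx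
      · rw [tb_rigid_ball tb_one_mem_SO]; exact Set.subset_union_right
  · intro r hr0 hrα
    exact tb_part2 i0 hα0 hα1 hr0 hrα
  · intro r hr
    exact tb_part3 i0 (⟨1, by omega⟩ : Fin n) hj hα0 hα1 hr
end
end

section
/- Let Ω = (0,1)² ⊆ ℝ², let 1 denote the 2×2 identity matrix, and set K₂ = {0, 2 e₂⊗e₂} ⊆ M^{2×2}. If y : Ω → ℝ² is Lipschitz and Dy(x) ∈ {1} ∪ K₂ for almost every x ∈ Ω, then either Dy(x) = 1 for a.e. x ∈ Ω or Dy(x) ∈ K₂ for a.e. x ∈ Ω. (Thus the sets {1} and {0, 2 e₂⊗e₂} are gradient incompatible.) -/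
open MeasureTheory Matrix Pointwise ENNReal

noncomputable section

namespace IncompatAux
open MeasureTheory Set Filter Incompat

/-! ### 1D results -/

lemma slope_tendsto_of_hasDerivAt {f : ℝ → ℝ} {x v : ℝ} (h : HasDerivAt f v x) :
    Tendsto (fun n : ℕ => (n+1 : ℝ) * (f (x + 1/(n+1)) - f x)) atTop (nhds v) := by
  have hs := hasDerivAt_iff_tendsto_slope.1 h
  have hz : Tendsto (fun n : ℕ => x + 1/(n+1 : ℝ)) atTop (nhdsWithin x {x}ᶜ) := by
    apply tendsto_nhdsWithin_of_tendsto_nhds_of_eventually_within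
    · have : Tendsto (fun n : ℕ => 1/(n+1 : ℝ)) atTop (nhds 0) :=
        tendsto_one_div_add_atTop_nhds_zero_nat
      simpa using (tendsto_const_nhds.add this)
    · filter_upwards with n
      have : (0:ℝ) < 1/(n+1) := by positivity
      simp only [mem_compl_iff, mem_singleton_iff]
      intro hcon
      nlinarith [hcon]
  have := hs.comp hz
  refine this.congr fun n => ?_
  have hn : (1 : ℝ)/(n+1) ≠ 0 := by positivity
  simp only [Function.comp, slope_def_field]
  field_simp
  ring
/-- A Lipschitz function on ℝ with a.e. zero derivative on `Ioo a b` is constant there. -/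
lemma const_of_lipschitz_ae_deriv_zero {f : ℝ → ℝ} {K : NNReal} (hf : LipschitzWith K f)
    {a b : ℝ} (hd : ∀ᵐ t ∂(volume.restrict (Ioo a b)), HasDerivAt f 0 t) :
    ∀ c ∈ Ioo a b, ∀ d ∈ Ioo a b, f c = f d := by
  have hcont : Continuous f := hf.continuous
  suffices H : ∀ c ∈ Ioo a b, ∀ d ∈ Ioo a b, c ≤ d → f c = f d by
    intro c hc d hd'
    rcases le_total c d with h | h
    · exact H c hc d hd' h
    · exact (H d hd' c hc h).symm
  intro c hc d hd' hcd
  have hcontn : ∀ h : ℝ, Continuous fun x => f (x + h) := fun h =>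
    hcont.comp (continuous_id.add continuous_const)
  have hint : ∀ (u v : ℝ), IntervalIntegrable f volume u v := fun u v =>
    hcont.intervalIntegrable u v
  -- T1 : integrals of difference quotients tend to 0
  have hsub : Ioc c d ⊆ Ioo a b := fun x hx => ⟨lt_trans hc.1 hx.1, lt_of_le_of_lt hx.2 hd'.2⟩
  have hd2 : ∀ᵐ t ∂(volume.restrict (Ioc c d)), HasDerivAt f 0 t :=
    ae_restrict_of_ae_restrict_of_subset hsub hd
  have T1 : Tendsto (fun n : ℕ => ∫ x in Ioc c d, (n+1 : ℝ) * (f (x + 1/(n+1)) - f x))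
      atTop (nhds 0) := by
    have := MeasureTheory.tendsto_integral_of_dominated_convergence
      (μ := volume.restrict (Ioc c d)) (bound := fun _ => (K : ℝ))
      (F := fun (n : ℕ) x => (n+1 : ℝ) * (f (x + 1/(n+1)) - f x)) (f := fun _ => (0:ℝ))
      (fun n => (continuous_const.mul ((hcontn _).sub hcont)).aestronglyMeasurable)
      (integrable_const _)
      (fun n => ae_of_all _ fun x => by
        have hn : (0:ℝ) < (n:ℝ)+1 := by positivity
        have h1 : |f (x + 1/(n+1)) - f x| ≤ (K : ℝ) * (1/((n:ℝ)+1)) := by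
          have := hf.dist_le_mul (x + 1/(n+1)) x
          simp only [Real.dist_eq, add_sub_cancel_left] at this
          rwa [abs_of_pos (by positivity : (0:ℝ) < 1/((n:ℝ)+1))] at this
        have : ‖((n:ℝ)+1) * (f (x + 1/(n+1)) - f x)‖
            = ((n:ℝ)+1) * |f (x + 1/(n+1)) - f x| := by
          rw [norm_mul, Real.norm_eq_abs, Real.norm_eq_abs, abs_of_pos hn]
        rw [this]
        calc ((n:ℝ)+1) * |f (x + 1/(n+1)) - f x| ≤ ((n:ℝ)+1) * ((K:ℝ) * (1/((n:ℝ)+1))) :=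
              mul_le_mul_of_nonneg_left h1 hn.le
          _ = (K : ℝ) := by field_simp)
      (by
        filter_upwards [hd2] with x hx
        simpa using slope_tendsto_of_hasDerivAt hx)
    simpa using this
  -- rewrite the integral
  have key : ∀ n : ℕ, (∫ x in Ioc c d, (n+1 : ℝ) * (f (x + 1/(n+1)) - f x))
      = (n+1:ℝ) * ((∫ x in d..(d + 1/(n+1)), f x) - ∫ x in c..(c + 1/(n+1)), f x) := by
    intro n
    set h : ℝ := 1/((n:ℝ)+1) with hh
    have e0 : (∫ x in Ioc c d, (n+1 : ℝ) * (f (x + h) - f x))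
        = ∫ x in c..d, (n+1 : ℝ) * (f (x + h) - f x) :=
      (intervalIntegral.integral_of_le hcd).symm
    have e1 : (∫ x in c..d, (n+1 : ℝ) * (f (x + h) - f x))
        = (n+1:ℝ) * ∫ x in c..d, (f (x + h) - f x) :=
      intervalIntegral.integral_const_mul _ _
    have e2 : (∫ x in c..d, (f (x + h) - f x))
        = (∫ x in (c+h)..(d+h), f x) - ∫ x in c..d, f x := by
      rw [intervalIntegral.integral_sub ((hcontn h).intervalIntegrable c d) (hint c d)]
      congr 1
      exact intervalIntegral.integral_comp_add_right f h
    have e3 : (∫ x in (c+h)..(d+h), f x) - (∫ x in c..d, f x)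
        = (∫ x in d..(d+h), f x) - ∫ x in c..(c+h), f x := by
      have A : (∫ x in (c+h)..d, f x) + (∫ x in d..(d+h), f x) = ∫ x in (c+h)..(d+h), f x :=
        intervalIntegral.integral_add_adjacent_intervals (hint _ _) (hint _ _)
      have B : (∫ x in c..(c+h), f x) + (∫ x in (c+h)..d, f x) = ∫ x in c..d, f x :=
        intervalIntegral.integral_add_adjacent_intervals (hint _ _) (hint _ _)
      rw [← A, ← B]; ring
    rw [e0, e1, e2, e3]
  -- endpoint averages converge
  have end_tendsto : ∀ e : ℝ, Tendsto
      (fun n : ℕ => (n+1:ℝ) * ∫ x in e..(e + 1/(n+1)), f x) atTop (nhds (f e)) := by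
    intro e
    have hdiff : ∀ n : ℕ, ‖(n+1:ℝ) * (∫ x in e..(e + 1/(n+1)), f x) - f e‖
        ≤ (K : ℝ) * (1/((n:ℝ)+1)) := by
      intro n
      set h : ℝ := 1/((n:ℝ)+1) with hh
      have hhpos : (0:ℝ) < h := by positivity
      have hsplit : (∫ x in e..(e+h), f x) = (∫ x in e..(e+h), (f x - f e)) + h * f e := by
        rw [intervalIntegral.integral_sub (hint _ _) (intervalIntegrable_const)]
        simp
      have hbd : ‖∫ x in e..(e+h), (f x - f e)‖ ≤ (K:ℝ) * h * |e + h - e| := by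
        apply intervalIntegral.norm_integral_le_of_norm_le_const
        intro x hx
        have hx' : x ∈ Set.Ioc e (e+h) := by
          rwa [Set.uIoc_of_le (by linarith)] at hx
        have hxe : |x - e| ≤ h := by
          rw [abs_of_pos (by linarith [hx'.1])]
          linarith [hx'.2]
        calc ‖f x - f e‖ = dist (f x) (f e) := by rw [Real.dist_eq]; rfl
          _ ≤ (K:ℝ) * dist x e := hf.dist_le_mul x e
          _ ≤ (K:ℝ) * h := mul_le_mul_of_nonneg_left (by rw [Real.dist_eq]; exact hxe)
              (K.coe_nonneg)
      have hne : ((n:ℝ)+1) * h = 1 := by rw [hh]; field_simp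
      calc ‖(n+1:ℝ) * (∫ x in e..(e + h), f x) - f e‖
          = ‖(n+1:ℝ) * ∫ x in e..(e+h), (f x - f e)‖ := by
            rw [hsplit, mul_add, ← mul_assoc, hne, one_mul, add_sub_cancel_right]
        _ = ((n:ℝ)+1) * ‖∫ x in e..(e+h), (f x - f e)‖ := by
            rw [norm_mul, Real.norm_eq_abs, abs_of_pos (by positivity : (0:ℝ) < (n:ℝ)+1)]
        _ ≤ ((n:ℝ)+1) * ((K:ℝ) * h * |e + h - e|) :=
            mul_le_mul_of_nonneg_left hbd (by positivity)
        _ = (K:ℝ) * h := by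
            rw [add_sub_cancel_left, abs_of_pos hhpos]
            calc ((n:ℝ)+1) * ((K:ℝ) * h * h) = (K:ℝ) * h * (((n:ℝ)+1) * h) := by ring
              _ = (K:ℝ) * h := by rw [hne, mul_one]
    have hKn : Tendsto (fun n : ℕ => (K:ℝ) * (1/((n:ℝ)+1))) atTop (nhds 0) := by
      simpa using (tendsto_const_nhds (x := (K:ℝ))).mul tendsto_one_div_add_atTop_nhds_zero_nat
    have := squeeze_zero_norm hdiff hKn
    have h2 : Tendsto (fun n : ℕ => ((n+1:ℝ) * ∫ x in e..(e + 1/(n+1)), f x) - f e)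
        atTop (nhds 0) := this
    simpa using h2.add (tendsto_const_nhds (x := f e))
  -- combine
  have T2 : Tendsto (fun n : ℕ => ∫ x in Ioc c d, (n+1 : ℝ) * (f (x + 1/(n+1)) - f x))
      atTop (nhds (f d - f c)) := by
    have := (end_tendsto d).sub (end_tendsto c)
    refine this.congr fun n => ?_
    rw [key n]; ring
  have := tendsto_nhds_unique T1 T2
  linarith [this]

/-- Version for functions Lipschitz only on `Ioo a b`. -/
lemma const_of_lipschitzOn_ae_deriv_zero {f : ℝ → ℝ} {K : NNReal} {a b : ℝ}
    (hf : LipschitzOnWith K f (Ioo a b))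
    (hd : ∀ᵐ t ∂(volume : Measure ℝ), t ∈ Ioo a b → HasDerivAt f 0 t) :
    ∀ c ∈ Ioo a b, ∀ d ∈ Ioo a b, f c = f d := by
  obtain ⟨g, hg, hfg⟩ := hf.extend_real
  have hd' : ∀ᵐ t ∂(volume.restrict (Ioo a b)), HasDerivAt g 0 t := by
    rw [ae_restrict_iff' measurableSet_Ioo]
    filter_upwards [hd] with t ht htI
    refine (ht htI).congr_of_eventuallyEq ?_
    filter_upwards [isOpen_Ioo.mem_nhds htI] with u hu
    exact (hfg hu).symm
  intro c hc d hd''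
  rw [hfg hc, hfg hd'']
  exact const_of_lipschitz_ae_deriv_zero hg hd' c hc d hd''
abbrev E2 := EuclideanSpace ℝ (Fin 2)

def pt (s t : ℝ) : E2 := (WithLp.equiv 2 (Fin 2 → ℝ)).symm ![s, t]

@[simp] lemma pt_zero (s t : ℝ) : pt s t 0 = s := rfl
@[simp] lemma pt_one (s t : ℝ) : pt s t 1 = t := rfl

lemma pt_eta (x : E2) : pt (x 0) (x 1) = x := by
  ext i
  fin_cases i <;> rfl

def ebasis (i : Fin 2) : E2 := EuclideanSpace.single i (1:ℝ)

lemma pt_add_smul_e1 (s t r : ℝ) : pt s (t + r) = pt s t + r • ebasis 1 := by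
  ext i
  fin_cases i <;>
    simp [pt, ebasis, PiLp.add_apply, PiLp.smul_apply, EuclideanSpace.single_apply,
      WithLp.equiv_symm_apply]

lemma pt_add_smul_e0 (s t r : ℝ) : pt (s + r) t = pt s t + r • ebasis 0 := by
  ext i
  fin_cases i <;>
    simp [pt, ebasis, PiLp.add_apply, PiLp.smul_apply, EuclideanSpace.single_apply,
      WithLp.equiv_symm_apply]

lemma dist_pt_vert (s t t' : ℝ) : dist (pt s t) (pt s t') = dist t t' := by
  rw [EuclideanSpace.dist_eq]
  have : ∀ i : Fin 2, dist (pt s t i) (pt s t' i) ^ 2 = if i = 1 then dist t t' ^ 2 else 0 := by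
    intro i; fin_cases i <;> simp [Real.dist_eq]
  rw [Fin.sum_univ_two, this 0, this 1]
  simp [Real.sqrt_sq_eq_abs, dist_nonneg, abs_of_nonneg dist_nonneg]

lemma dist_pt_horiz (s s' t : ℝ) : dist (pt s t) (pt s' t) = dist s s' := by
  rw [EuclideanSpace.dist_eq]
  have : ∀ i : Fin 2, dist (pt s t i) (pt s' t i) ^ 2 = if i = 0 then dist s s' ^ 2 else 0 := by
    intro i; fin_cases i <;> simp [Real.dist_eq]
  rw [Fin.sum_univ_two, this 0, this 1]
  simp [Real.sqrt_sq_eq_abs, dist_nonneg, abs_of_nonneg dist_nonneg]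

lemma abs_coord_le_norm (v : E2) (i : Fin 2) : |v i| ≤ ‖v‖ := by
  rw [EuclideanSpace.norm_eq]
  have h1 : |v i| = Real.sqrt (‖v i‖^2) := by
    rw [Real.sqrt_sq_eq_abs]; simp
  rw [h1]
  apply Real.sqrt_le_sqrt
  exact Finset.single_le_sum (f := fun j => ‖v j‖^2) (fun j _ => by positivity)
    (Finset.mem_univ i)

lemma dist_coord_le (v w : E2) (i : Fin 2) : dist (v i) (w i) ≤ dist v w := by
  rw [Real.dist_eq, dist_eq_norm]
  exact abs_coord_le_norm (v - w) i

-- derivative of y along vertical / horizontal lines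
lemma hasDerivAt_vert {y : E2 → E2} {x : E2} (h : DifferentiableAt ℝ y x) (i : Fin 2) :
    HasDerivAt (fun t => y (pt (x 0) t) i) (Dmat y x i 1) (x 1) := by
  have hγ : HasDerivAt (fun t : ℝ => pt (x 0) t) (ebasis 1) (x 1) := by
    have base : HasDerivAt (fun t : ℝ => pt (x 0) 0 + t • ebasis 1) (ebasis 1) (x 1) := by
      simpa using ((hasDerivAt_id (x 1)).smul_const (ebasis 1)).const_add (pt (x 0) 0)
    refine base.congr_of_eventuallyEq ?_
    filter_upwards with t
    rw [show t = 0 + t by ring, pt_add_smul_e1]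
    simp
  have hx' : HasFDerivAt y (fderiv ℝ y x) (pt (x 0) (x 1)) := by
    rw [pt_eta]; exact h.hasFDerivAt
  have hcomp : HasDerivAt (fun t => y (pt (x 0) t)) (fderiv ℝ y x (ebasis 1)) (x 1) :=
    HasFDerivAt.comp_hasDerivAt (x 1) hx' hγ
  have := (EuclideanSpace.proj i).hasFDerivAt.comp_hasDerivAt (x 1) hcomp
  exact this

lemma hasDerivAt_horiz {y : E2 → E2} {x : E2} (h : DifferentiableAt ℝ y x) (i : Fin 2) :
    HasDerivAt (fun s => y (pt s (x 1)) i) (Dmat y x i 0) (x 0) := by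
  have hγ : HasDerivAt (fun s : ℝ => pt s (x 1)) (ebasis 0) (x 0) := by
    have base : HasDerivAt (fun s : ℝ => pt 0 (x 1) + s • ebasis 0) (ebasis 0) (x 0) := by
      simpa using ((hasDerivAt_id (x 0)).smul_const (ebasis 0)).const_add (pt 0 (x 1))
    refine base.congr_of_eventuallyEq ?_
    filter_upwards with s
    rw [show s = 0 + s by ring, pt_add_smul_e0]
    simp
  have hx' : HasFDerivAt y (fderiv ℝ y x) (pt (x 0) (x 1)) := by
    rw [pt_eta]; exact h.hasFDerivAt
  have hcomp : HasDerivAt (fun s => y (pt s (x 1))) (fderiv ℝ y x (ebasis 0)) (x 0) :=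
    HasFDerivAt.comp_hasDerivAt (x 0) hx' hγ
  have := (EuclideanSpace.proj i).hasFDerivAt.comp_hasDerivAt (x 0) hcomp
  exact this

-- measurable equivalence with ℝ × ℝ
def Φ : E2 ≃ᵐ ℝ × ℝ :=
  (MeasurableEquiv.toLp 2 (Fin 2 → ℝ)).symm.trans (MeasurableEquiv.piFinTwo fun _ => ℝ)

lemma hΦ : MeasurePreserving Φ (volume : Measure E2) (volume : Measure (ℝ × ℝ)) :=
  (volume_preserving_piFinTwo fun _ => ℝ).comp
    (EuclideanSpace.volume_preserving_symm_measurableEquiv_toLp (Fin 2))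

lemma hΦsymm : MeasurePreserving Φ.symm (volume : Measure (ℝ × ℝ)) (volume : Measure E2) :=
  MeasurePreserving.symm Φ hΦ

@[simp] lemma Φ_apply (x : E2) : Φ x = (x 0, x 1) := rfl

@[simp] lemma Φ_symm_apply (p : ℝ × ℝ) : Φ.symm p = pt p.1 p.2 := by
  have h1 : Φ (pt p.1 p.2) = p := by simp
  conv_lhs => rw [← h1]
  rw [MeasurableEquiv.symm_apply_apply]

lemma ae_push {P : E2 → Prop} (h : ∀ᵐ x ∂(volume : Measure E2), P x) :
    ∀ᵐ p ∂(volume : Measure (ℝ × ℝ)), P (pt p.1 p.2) := by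
  have := hΦsymm.quasiMeasurePreserving.tendsto_ae.eventually h
  filter_upwards [this] with p hp
  simpa using hp

lemma ae_pull {P : ℝ × ℝ → Prop} (h : ∀ᵐ p ∂(volume : Measure (ℝ × ℝ)), P p) :
    ∀ᵐ x ∂(volume : Measure E2), P (x 0, x 1) := by
  have := hΦ.quasiMeasurePreserving.tendsto_ae.eventually h
  filter_upwards [this] with x hx
  simpa using hx

lemma ae_fst_prod {A : ℝ → Prop} (h : ∀ᵐ s ∂(volume : Measure ℝ), A s) :
    ∀ᵐ p ∂(volume : Measure (ℝ × ℝ)), A p.1 := by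
  rw [show (volume : Measure (ℝ × ℝ)) = volume.prod volume from rfl]
  set N := toMeasurable volume {s | ¬ A s} with hN
  have hN0 : volume N = 0 := by
    rw [hN, measure_toMeasurable]
    exact h
  refine measure_mono_null (fun p hp => ?_) (?_ : (volume.prod volume) (N ×ˢ univ) = 0)
  · exact ⟨subset_toMeasurable _ _ hp, mem_univ _⟩
  · rw [Measure.prod_prod, hN0, zero_mul]

lemma ae_snd_prod {A : ℝ → Prop} (h : ∀ᵐ s ∂(volume : Measure ℝ), A s) :
    ∀ᵐ p ∂(volume : Measure (ℝ × ℝ)), A p.2 := by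
  rw [show (volume : Measure (ℝ × ℝ)) = volume.prod volume from rfl]
  set N := toMeasurable volume {s | ¬ A s} with hN
  have hN0 : volume N = 0 := by
    rw [hN, measure_toMeasurable]
    exact h
  refine measure_mono_null (fun p hp => ?_) (?_ : (volume.prod volume) (univ ×ˢ N) = 0)
  · exact ⟨mem_univ _, subset_toMeasurable _ _ hp⟩
  · rw [Measure.prod_prod, hN0, mul_zero]

lemma ae_ae_fst {P : ℝ × ℝ → Prop} (h : ∀ᵐ p ∂(volume : Measure (ℝ × ℝ)), P p) :
    ∀ᵐ s ∂(volume : Measure ℝ), ∀ᵐ t ∂(volume : Measure ℝ), P (s, t) := by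
  rw [show (volume : Measure (ℝ × ℝ)) = volume.prod volume from rfl] at h
  exact Measure.ae_ae_of_ae_prod h

lemma ae_ae_snd {P : ℝ × ℝ → Prop} (h : ∀ᵐ p ∂(volume : Measure (ℝ × ℝ)), P p) :
    ∀ᵐ t ∂(volume : Measure ℝ), ∀ᵐ s ∂(volume : Measure ℝ), P (s, t) := by
  rw [show (volume : Measure (ℝ × ℝ)) = volume.prod volume from rfl] at h
  have hswap := Measure.measurePreserving_swap (μ := (volume : Measure ℝ))
    (ν := (volume : Measure ℝ))
  have := hswap.quasiMeasurePreserving.tendsto_ae.eventually h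
  exact Measure.ae_ae_of_ae_prod this

abbrev MK : Matrix (Fin 2) (Fin 2) ℝ := (2:ℝ) • Matrix.vecMulVec ![(0:ℝ), 1] ![(0:ℝ), 1]

lemma MK_apply : MK 0 0 = 0 ∧ MK 0 1 = 0 ∧ MK 1 0 = 0 ∧ MK 1 1 = 2 := by
  refine ⟨?_, ?_, ?_, ?_⟩ <;>
    simp [MK, Matrix.vecMulVec_apply, Matrix.smul_apply]

lemma one_apply' : (1 : Matrix (Fin 2) (Fin 2) ℝ) 0 0 = 1 ∧
    (1 : Matrix (Fin 2) (Fin 2) ℝ) 0 1 = 0 ∧ (1 : Matrix (Fin 2) (Fin 2) ℝ) 1 0 = 0 ∧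
    (1 : Matrix (Fin 2) (Fin 2) ℝ) 1 1 = 1 := by
  refine ⟨?_, ?_, ?_, ?_⟩ <;> simp [Matrix.one_apply]

lemma offdiag_zero {D : Matrix (Fin 2) (Fin 2) ℝ} (h : D = 1 ∨ D = 0 ∨ D = MK) :
    D 0 1 = 0 ∧ D 1 0 = 0 := by
  rcases h with h | h | h <;> subst h <;>
    simp [Matrix.one_apply, MK, Matrix.vecMulVec_apply, Matrix.smul_apply]

lemma matrix_facts {D : Matrix (Fin 2) (Fin 2) ℝ} (h : D = 1 ∨ D = 0 ∨ D = MK) :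
    (D = 1 ↔ D 0 0 = 1) ∧ (D = 1 ↔ D 1 1 = 1) ∧ (D ≠ 1 → D 0 0 = 0) ∧ (D ≠ 1 → D 1 1 ≠ 1) := by
  have e1 := one_apply'
  have eM := MK_apply
  rcases h with h | h | h <;> subst h
  · exact ⟨⟨fun _ => e1.1, fun _ => rfl⟩, ⟨fun _ => e1.2.2.2, fun _ => rfl⟩,
      fun hne => absurd rfl hne, fun hne => absurd rfl hne⟩
  · have hne : (0 : Matrix (Fin 2) (Fin 2) ℝ) ≠ 1 := by
      intro hc
      have := congrFun (congrFun hc 0) 0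
      rw [e1.1] at this
      simp at this
    refine ⟨⟨fun hc => absurd hc hne, fun hc => by simp at hc⟩,
      ⟨fun hc => absurd hc hne, fun hc => by simp at hc⟩, fun _ => rfl, fun _ => by simp⟩
  · have hne : MK ≠ 1 := by
      intro hc
      have := congrFun (congrFun hc 1) 1
      rw [eM.2.2.2, e1.2.2.2] at this
      norm_num at this
    refine ⟨⟨fun hc => absurd hc hne, fun hc => ?_⟩,
      ⟨fun hc => absurd hc hne, fun hc => ?_⟩, fun _ => eM.1, fun _ => ?_⟩
    · rw [eM.1] at hc; norm_num at hc
    · rw [eM.2.2.2] at hc; norm_num at hc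
    · rw [eM.2.2.2]; norm_num
end IncompatAux

open IncompatAux Set Filter

open Incompat NNReal Bornology

/-- The sets `K₁ = {1}` and `K₂ = {0, 2e₂⊗e₂}` in `M^{2×2}` are gradient
incompatible on `Ω = (0,1)²`. -/
theorem identity_and_pair_gradient_incompatible
    (y : EuclideanSpace ℝ (Fin 2) → EuclideanSpace ℝ (Fin 2))
    (hy : ∃ K : ℝ≥0, LipschitzOnWith K y
      {x : EuclideanSpace ℝ (Fin 2) | x 0 ∈ Set.Ioo (0:ℝ) 1 ∧ x 1 ∈ Set.Ioo (0:ℝ) 1})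
    (hgrad : ∀ᵐ x ∂(volume.restrict
        {x : EuclideanSpace ℝ (Fin 2) | x 0 ∈ Set.Ioo (0:ℝ) 1 ∧ x 1 ∈ Set.Ioo (0:ℝ) 1}),
      Dmat y x = (1 : Matrix (Fin 2) (Fin 2) ℝ) ∨
      Dmat y x ∈ ({0, (2:ℝ) • Matrix.vecMulVec ![(0:ℝ), 1] ![(0:ℝ), 1]} :
        Set (Matrix (Fin 2) (Fin 2) ℝ))) :
    (∀ᵐ x ∂(volume.restrict
        {x : EuclideanSpace ℝ (Fin 2) | x 0 ∈ Set.Ioo (0:ℝ) 1 ∧ x 1 ∈ Set.Ioo (0:ℝ) 1}),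
      Dmat y x = (1 : Matrix (Fin 2) (Fin 2) ℝ)) ∨
    (∀ᵐ x ∂(volume.restrict
        {x : EuclideanSpace ℝ (Fin 2) | x 0 ∈ Set.Ioo (0:ℝ) 1 ∧ x 1 ∈ Set.Ioo (0:ℝ) 1}),
      Dmat y x ∈ ({0, (2:ℝ) • Matrix.vecMulVec ![(0:ℝ), 1] ![(0:ℝ), 1]} :
        Set (Matrix (Fin 2) (Fin 2) ℝ))) := by
  classical
  set Ω : Set E2 :=
    {x : EuclideanSpace ℝ (Fin 2) | x 0 ∈ Set.Ioo (0:ℝ) 1 ∧ x 1 ∈ Set.Ioo (0:ℝ) 1} with hΩdef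
  obtain ⟨K, hLip⟩ := hy
  -- Ω is open and measurable
  have hΩeq : Ω = ((fun x : E2 => x 0) ⁻¹' Ioo 0 1) ∩ ((fun x : E2 => x 1) ⁻¹' Ioo 0 1) := rfl
  have hc0 : Continuous fun x : E2 => x 0 := (EuclideanSpace.proj (0 : Fin 2)).continuous
  have hc1 : Continuous fun x : E2 => x 1 := (EuclideanSpace.proj (1 : Fin 2)).continuous
  have hΩopen : IsOpen Ω := by
    rw [hΩeq]
    exact (isOpen_Ioo.preimage hc0).inter (isOpen_Ioo.preimage hc1)
  have hΩmeas : MeasurableSet Ω := hΩopen.measurableSet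
  have hptΩ : ∀ s t : ℝ, pt s t ∈ Ω ↔ (s ∈ Ioo (0:ℝ) 1 ∧ t ∈ Ioo (0:ℝ) 1) := by
    intro s t; rw [hΩdef]; simp [Set.mem_setOf_eq]
  -- the gradient hypothesis in pointwise form
  have hgrad' : ∀ᵐ x ∂(volume : Measure E2), x ∈ Ω →
      (Dmat y x = 1 ∨ Dmat y x = 0 ∨ Dmat y x = MK) := by
    have := (ae_restrict_iff' hΩmeas).1 hgrad
    filter_upwards [this] with x hx hxΩ
    rcases hx hxΩ with h | h
    · exact Or.inl h
    · simp only [Set.mem_insert_iff, Set.mem_singleton_iff] at h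
      exact Or.inr h
  -- Rademacher
  have hdiff : ∀ᵐ x ∂(volume : Measure E2), x ∈ Ω → DifferentiableAt ℝ y x := by
    filter_upwards [hLip.ae_differentiableWithinAt_of_mem] with x hx hxΩ
    exact (hx hxΩ).differentiableAt (hΩopen.mem_nhds hxΩ)
  have hGood : ∀ᵐ x ∂(volume : Measure E2), x ∈ Ω →
      (DifferentiableAt ℝ y x ∧ (Dmat y x = 1 ∨ Dmat y x = 0 ∨ Dmat y x = MK)) := by
    filter_upwards [hgrad', hdiff] with x h1 h2 hxΩ
    exact ⟨h2 hxΩ, h1 hxΩ⟩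
  -- Fubini, both orders
  have hprod : ∀ᵐ p ∂(volume : Measure (ℝ × ℝ)),
      (p.1 ∈ Ioo (0:ℝ) 1 ∧ p.2 ∈ Ioo (0:ℝ) 1) →
      (DifferentiableAt ℝ y (pt p.1 p.2) ∧
        (Dmat y (pt p.1 p.2) = 1 ∨ Dmat y (pt p.1 p.2) = 0 ∨ Dmat y (pt p.1 p.2) = MK)) := by
    have := ae_push hGood
    filter_upwards [this] with p hp hmem
    exact hp ((hptΩ p.1 p.2).2 hmem)
  have hfub1 : ∀ᵐ s ∂(volume : Measure ℝ), ∀ᵐ t ∂(volume : Measure ℝ),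
      (s ∈ Ioo (0:ℝ) 1 ∧ t ∈ Ioo (0:ℝ) 1) →
      (DifferentiableAt ℝ y (pt s t) ∧
        (Dmat y (pt s t) = 1 ∨ Dmat y (pt s t) = 0 ∨ Dmat y (pt s t) = MK)) := ae_ae_fst hprod
  have hfub2 : ∀ᵐ t ∂(volume : Measure ℝ), ∀ᵐ s ∂(volume : Measure ℝ),
      (s ∈ Ioo (0:ℝ) 1 ∧ t ∈ Ioo (0:ℝ) 1) →
      (DifferentiableAt ℝ y (pt s t) ∧
        (Dmat y (pt s t) = 1 ∨ Dmat y (pt s t) = 0 ∨ Dmat y (pt s t) = MK)) := ae_ae_snd hprod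
  -- section functions
  set F : ℝ → ℝ := fun s => y (pt s (1/2)) 0 with hF
  set G : ℝ → ℝ := fun t => y (pt (1/2) t) 1 with hG
  have half : (1/2 : ℝ) ∈ Ioo (0:ℝ) 1 := by norm_num
  -- vertical constancy of component 0
  have hVC : ∀ᵐ s ∂(volume : Measure ℝ), s ∈ Ioo (0:ℝ) 1 →
      ∀ t ∈ Ioo (0:ℝ) 1, y (pt s t) 0 = F s := by
    filter_upwards [hfub1] with s hs hsI
    have hfLip : LipschitzOnWith K (fun t => y (pt s t) 0) (Ioo 0 1) := by
      apply LipschitzOnWith.of_dist_le_mul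
      intro t ht t' ht'
      calc dist (y (pt s t) 0) (y (pt s t') 0) ≤ dist (y (pt s t)) (y (pt s t')) :=
            dist_coord_le _ _ 0
        _ ≤ K * dist (pt s t) (pt s t') :=
            hLip.dist_le_mul _ ((hptΩ s t).2 ⟨hsI, ht⟩) _ ((hptΩ s t').2 ⟨hsI, ht'⟩)
        _ = K * dist t t' := by rw [dist_pt_vert]
    have hder : ∀ᵐ t ∂(volume : Measure ℝ), t ∈ Ioo (0:ℝ) 1 →
        HasDerivAt (fun u => y (pt s u) 0) 0 t := by
      filter_upwards [hs] with t htg htI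
      have hGx := htg ⟨hsI, htI⟩
      have h1 := hasDerivAt_vert (y := y) (x := pt s t) hGx.1 0
      have hval : Dmat y (pt s t) 0 1 = 0 := (offdiag_zero hGx.2).1
      rw [hval] at h1
      simpa using h1
    intro t htI
    exact const_of_lipschitzOn_ae_deriv_zero hfLip hder t htI (1/2) half
  -- horizontal constancy of component 1
  have hHC : ∀ᵐ t ∂(volume : Measure ℝ), t ∈ Ioo (0:ℝ) 1 →
      ∀ s ∈ Ioo (0:ℝ) 1, y (pt s t) 1 = G t := by
    filter_upwards [hfub2] with t ht htI
    have hfLip : LipschitzOnWith K (fun u => y (pt u t) 1) (Ioo 0 1) := by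
      apply LipschitzOnWith.of_dist_le_mul
      intro s hsmem s' hs'
      calc dist (y (pt s t) 1) (y (pt s' t) 1) ≤ dist (y (pt s t)) (y (pt s' t)) :=
            dist_coord_le _ _ 1
        _ ≤ K * dist (pt s t) (pt s' t) :=
            hLip.dist_le_mul _ ((hptΩ s t).2 ⟨hsmem, htI⟩) _ ((hptΩ s' t).2 ⟨hs', htI⟩)
        _ = K * dist s s' := by rw [dist_pt_horiz]
    have hder : ∀ᵐ s ∂(volume : Measure ℝ), s ∈ Ioo (0:ℝ) 1 →
        HasDerivAt (fun u => y (pt u t) 1) 0 s := by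
      filter_upwards [ht] with s hsg hsI
      have hGx := hsg ⟨hsI, htI⟩
      have h1 := hasDerivAt_horiz (y := y) (x := pt s t) hGx.1 1
      have hval : Dmat y (pt s t) 1 0 = 0 := (offdiag_zero hGx.2).2
      rw [hval] at h1
      simpa using h1
    intro s hsI
    exact const_of_lipschitzOn_ae_deriv_zero hfLip hder s hsI (1/2) half
  -- the good 1d sets and their "bad" complements
  set NV : Set ℝ := {s | ¬ (s ∈ Ioo (0:ℝ) 1 → ∀ t ∈ Ioo (0:ℝ) 1, y (pt s t) 0 = F s)} with hNV
  set NH : Set ℝ := {t | ¬ (t ∈ Ioo (0:ℝ) 1 → ∀ s ∈ Ioo (0:ℝ) 1, y (pt s t) 1 = G t)} with hNH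
  have hNV0 : volume NV = 0 := hVC
  have hNH0 : volume NH = 0 := hHC
  set WV : Set ℝ := NV ∪ ⋃ n : ℕ, (fun s => s + 1/(n+1)) ⁻¹' NV with hWV
  set WH : Set ℝ := NH ∪ ⋃ n : ℕ, (fun t => t + 1/(n+1)) ⁻¹' NH with hWH
  have hWV0 : volume WV = 0 := by
    refine measure_union_null hNV0 (measure_iUnion_null fun n => ?_)
    rw [measure_preimage_add_right]
    exact hNV0
  have hWH0 : volume WH = 0 := by
    refine measure_union_null hNH0 (measure_iUnion_null fun n => ?_)
    rw [measure_preimage_add_right]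
    exact hNH0
  -- transfer the bad sets to 2d
  have h2WV : ∀ᵐ x ∂(volume : Measure E2), x 0 ∉ WV := by
    have h1 : ∀ᵐ s ∂(volume : Measure ℝ), s ∉ WV := measure_eq_zero_iff_ae_notMem.1 hWV0
    have := ae_pull (P := fun p => p.1 ∉ WV) (ae_fst_prod h1)
    simpa using this
  have h2WH : ∀ᵐ x ∂(volume : Measure E2), x 1 ∉ WH := by
    have h1 : ∀ᵐ t ∂(volume : Measure ℝ), t ∉ WH := measure_eq_zero_iff_ae_notMem.1 hWH0
    have := ae_pull (P := fun p => p.2 ∉ WH) (ae_snd_prod h1)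
    simpa using this
  -- the limit predicates
  set aP : ℝ → Prop := fun s =>
    Tendsto (fun n : ℕ => (n+1:ℝ) * (F (s + 1/(n+1)) - F s)) atTop (nhds 1) with haP
  set bP : ℝ → Prop := fun t =>
    Tendsto (fun n : ℕ => (n+1:ℝ) * (G (t + 1/(n+1)) - G t)) atTop (nhds 1) with hbP
  -- identification of the identity phase with aP/bP
  have haiff : ∀ᵐ x ∂(volume : Measure E2), x ∈ Ω → (Dmat y x = 1 ↔ aP (x 0)) := by
    filter_upwards [hGood, h2WV] with x hGx hWx hxΩ
    obtain ⟨hdx, hDS⟩ := hGx hxΩ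
    have hsI : x 0 ∈ Ioo (0:ℝ) 1 := hxΩ.1
    have htI : x 1 ∈ Ioo (0:ℝ) 1 := hxΩ.2
    have hsNV : x 0 ∉ NV := fun h => hWx (Or.inl h)
    have hsV : ∀ t ∈ Ioo (0:ℝ) 1, y (pt (x 0) t) 0 = F (x 0) := by
      rw [hNV, mem_setOf_eq, not_not] at hsNV
      exact hsNV hsI
    have hsVn : ∀ n : ℕ, x 0 + 1/(n+1) ∈ Ioo (0:ℝ) 1 →
        ∀ t ∈ Ioo (0:ℝ) 1, y (pt (x 0 + 1/(n+1)) t) 0 = F (x 0 + 1/(n+1)) := by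
      intro n hmem
      have : x 0 + 1/(n+1) ∉ NV := fun h => hWx (Or.inr (mem_iUnion.2 ⟨n, h⟩))
      rw [hNV, mem_setOf_eq, not_not] at this
      exact this hmem
    have hder := hasDerivAt_horiz (y := y) hdx 0
    have hslope := slope_tendsto_of_hasDerivAt hder
    have hEq : (fun n : ℕ => (n+1:ℝ) *
          (y (pt (x 0 + 1/(n+1)) (x 1)) 0 - y (pt (x 0) (x 1)) 0))
        =ᶠ[atTop] fun n : ℕ => (n+1:ℝ) * (F (x 0 + 1/(n+1)) - F (x 0)) := by
      have hev : ∀ᶠ n : ℕ in atTop, 1/((n:ℝ)+1) < 1 - x 0 :=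
        tendsto_one_div_add_atTop_nhds_zero_nat.eventually_lt_const (by linarith [hsI.2])
      filter_upwards [hev] with n hn
      have hmem : x 0 + 1/(n+1) ∈ Ioo (0:ℝ) 1 := by
        constructor
        · have : (0:ℝ) < 1/((n:ℝ)+1) := by positivity
          linarith [hsI.1]
        · linarith
      rw [hsVn n hmem (x 1) htI, hsV (x 1) htI]
    have hFt : Tendsto (fun n : ℕ => (n+1:ℝ) * (F (x 0 + 1/(n+1)) - F (x 0))) atTop
        (nhds (Dmat y x 0 0)) := hslope.congr' hEq
    have hfacts := matrix_facts hDS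
    constructor
    · intro h1
      have : Dmat y x 0 0 = 1 := hfacts.1.1 h1
      rw [haP]; rw [this] at hFt; exact hFt
    · intro hap
      exact hfacts.1.2 (tendsto_nhds_unique hFt hap)
  have hbiff : ∀ᵐ x ∂(volume : Measure E2), x ∈ Ω → (Dmat y x = 1 ↔ bP (x 1)) := by
    filter_upwards [hGood, h2WH] with x hGx hWx hxΩ
    obtain ⟨hdx, hDS⟩ := hGx hxΩ
    have hsI : x 0 ∈ Ioo (0:ℝ) 1 := hxΩ.1
    have htI : x 1 ∈ Ioo (0:ℝ) 1 := hxΩ.2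
    have htNH : x 1 ∉ NH := fun h => hWx (Or.inl h)
    have htH : ∀ s ∈ Ioo (0:ℝ) 1, y (pt s (x 1)) 1 = G (x 1) := by
      rw [hNH, mem_setOf_eq, not_not] at htNH
      exact htNH htI
    have htHn : ∀ n : ℕ, x 1 + 1/(n+1) ∈ Ioo (0:ℝ) 1 →
        ∀ s ∈ Ioo (0:ℝ) 1, y (pt s (x 1 + 1/(n+1))) 1 = G (x 1 + 1/(n+1)) := by
      intro n hmem
      have : x 1 + 1/(n+1) ∉ NH := fun h => hWx (Or.inr (mem_iUnion.2 ⟨n, h⟩))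
      rw [hNH, mem_setOf_eq, not_not] at this
      exact this hmem
    have hder := hasDerivAt_vert (y := y) hdx 1
    have hslope := slope_tendsto_of_hasDerivAt hder
    have hEq : (fun n : ℕ => (n+1:ℝ) *
          (y (pt (x 0) (x 1 + 1/(n+1))) 1 - y (pt (x 0) (x 1)) 1))
        =ᶠ[atTop] fun n : ℕ => (n+1:ℝ) * (G (x 1 + 1/(n+1)) - G (x 1)) := by
      have hev : ∀ᶠ n : ℕ in atTop, 1/((n:ℝ)+1) < 1 - x 1 :=
        tendsto_one_div_add_atTop_nhds_zero_nat.eventually_lt_const (by linarith [htI.2])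
      filter_upwards [hev] with n hn
      have hmem : x 1 + 1/(n+1) ∈ Ioo (0:ℝ) 1 := by
        constructor
        · have : (0:ℝ) < 1/((n:ℝ)+1) := by positivity
          linarith [htI.1]
        · linarith
      rw [htHn n hmem (x 0) hsI, htH (x 0) hsI]
    have hGt : Tendsto (fun n : ℕ => (n+1:ℝ) * (G (x 1 + 1/(n+1)) - G (x 1))) atTop
        (nhds (Dmat y x 1 1)) := hslope.congr' hEq
    have hfacts := matrix_facts hDS
    constructor
    · intro h1
      have : Dmat y x 1 1 = 1 := hfacts.2.1.1 h1
      rw [hbP]; rw [this] at hGt; exact hGt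
    · intro hbp
      exact hfacts.2.1.2 (tendsto_nhds_unique hGt hbp)
  -- combine the two characterizations
  have hab : ∀ᵐ x ∂(volume : Measure E2), x ∈ Ω → (aP (x 0) ↔ bP (x 1)) := by
    filter_upwards [haiff, hbiff] with x h1 h2 hxΩ
    rw [← h1 hxΩ, h2 hxΩ]
  have hpq : ∀ᵐ p ∂(volume : Measure (ℝ × ℝ)),
      (p.1 ∈ Ioo (0:ℝ) 1 ∧ p.2 ∈ Ioo (0:ℝ) 1) → (aP p.1 ↔ bP p.2) := by
    have := ae_push hab
    filter_upwards [this] with p hp hmem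
    simpa using hp ((hptΩ p.1 p.2).2 hmem)
  have hfs := ae_ae_fst hpq
  -- pick a good s₀
  have hres : ∀ᵐ s ∂(volume.restrict (Ioo (0:ℝ) 1)),
      (s ∈ Ioo (0:ℝ) 1 ∧ ∀ᵐ t ∂(volume : Measure ℝ),
        (s ∈ Ioo (0:ℝ) 1 ∧ t ∈ Ioo (0:ℝ) 1) → (aP s ↔ bP t)) := by
    filter_upwards [ae_restrict_of_ae hfs, self_mem_ae_restrict measurableSet_Ioo]
      with s h1 h2
    exact ⟨h2, h1⟩
  haveI hne : (ae (volume.restrict (Ioo (0:ℝ) 1))).NeBot :=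
    ae_neBot.2 (show volume.restrict (Ioo (0:ℝ) 1) ≠ 0 by
      rw [Ne, Measure.restrict_eq_zero]
      simp [Real.volume_Ioo])
  obtain ⟨s₀, hs₀I, hs₀⟩ := hres.exists
  by_cases hap0 : aP s₀
  · left
    have hbt : ∀ᵐ t ∂(volume : Measure ℝ), t ∈ Ioo (0:ℝ) 1 → bP t := by
      filter_upwards [hs₀] with t ht htI
      exact (ht ⟨hs₀I, htI⟩).1 hap0
    have h2 : ∀ᵐ x ∂(volume : Measure E2), x 1 ∈ Ioo (0:ℝ) 1 → bP (x 1) := by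
      have := ae_pull (P := fun p => p.2 ∈ Ioo (0:ℝ) 1 → bP p.2) (ae_snd_prod hbt)
      simpa using this
    rw [ae_restrict_iff' hΩmeas]
    filter_upwards [hbiff, h2] with x h1 h2' hxΩ
    exact (h1 hxΩ).2 (h2' hxΩ.2)
  · right
    have hbt : ∀ᵐ t ∂(volume : Measure ℝ), t ∈ Ioo (0:ℝ) 1 → ¬ bP t := by
      filter_upwards [hs₀] with t ht htI hb
      exact hap0 ((ht ⟨hs₀I, htI⟩).2 hb)
    have h2 : ∀ᵐ x ∂(volume : Measure E2), x 1 ∈ Ioo (0:ℝ) 1 → ¬ bP (x 1) := by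
      have := ae_pull (P := fun p => p.2 ∈ Ioo (0:ℝ) 1 → ¬ bP p.2) (ae_snd_prod hbt)
      simpa using this
    rw [ae_restrict_iff' hΩmeas]
    filter_upwards [hbiff, h2, hgrad'] with x h1 h2' h3 hxΩ
    have hne1 : Dmat y x ≠ 1 := fun hc => (h2' hxΩ.2) ((h1 hxΩ).1 hc)
    rcases h3 hxΩ with hc | hc | hc
    · exact absurd hc hne1
    · simp [hc]
    · simp [hc, MK]
end
end

section
/- Let Q = (0,1)² ⊆ ℝ², let 1 denote the 2×2 identity matrix, and set F = ½·1 + ½·e₂⊗e₂ (i.e. F = diag(1/2, 1)). For every δ > 0 there exists a Lipschitz map y : closure(Q) → ℝ² with y(x) = Fx for all x ∈ ∂Q, such that ℒ²({x ∈ Q : |Dy(x) − 1| < δ}) > 1/2 − δ and ℒ²({x ∈ Q : min(|Dy(x)|, |Dy(x) − 2 e₂⊗e₂|) < δ}) > 1/2 − δ. (This double-laminate construction shows that the pair of sets {1} and {0, 2 e₂⊗e₂} is not incompatible: a gradient Young measure ν = ½δ_{1} + ¼δ_{0} + ¼δ_{2e₂⊗e₂} is supported nontrivially on both sets.) -/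
open MeasureTheory Matrix Pointwise ENNReal

noncomputable section

open Incompat NNReal Bornology


open Filter Set

section DLaux

noncomputable def sg (a : ℝ) : ℝ := |a - round a|



lemma sg_nonneg (a : ℝ) : 0 ≤ sg a := abs_nonneg _
lemma sg_le (a : ℝ) (k : ℤ) : sg a ≤ |a - k| := round_le a k
lemma sg_le_half (a : ℝ) : sg a ≤ 1/2 := by have := abs_sub_round a; rw [sg]; linarith
lemma sg_int (a : ℝ) (k : ℤ) (h : a = k) : sg a = 0 := by simp [sg, h]

lemma sg_lipschitz : LipschitzWith 1 sg := by
  apply LipschitzWith.of_dist_le_mul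
  intro a b
  rw [NNReal.coe_one, one_mul, Real.dist_eq, Real.dist_eq]
  rw [abs_sub_le_iff]
  constructor
  · have h1 : sg a ≤ |a - round b| := sg_le a (round b)
    have h2 : |a - round b| ≤ |a - b| + |b - round b| := by
      have := abs_sub_abs_le_abs_sub (a - (round b:ℝ)) (b - (round b:ℝ))
      calc |a - round b| = |(a - b) + (b - round b)| := by ring_nf
        _ ≤ |a - b| + |b - round b| := abs_add_le _ _
    have : sg b = |b - round b| := rfl
    linarith [h1, h2]
  · have h1 : sg b ≤ |b - round a| := sg_le b (round a)
    have h2 : |b - round a| ≤ |b - a| + |a - round a| := by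
      calc |b - round a| = |(b - a) + (a - round a)| := by ring_nf
        _ ≤ |b - a| + |a - round a| := abs_add_le _ _
    have h3 : |b - a| = |a - b| := abs_sub_comm b a
    have : sg a = |a - round a| := rfl
    linarith

lemma round_eq_of (a : ℝ) (k : ℤ) (h1 : (k:ℝ) ≤ a + 1/2) (h2 : a + 1/2 < k + 1) : round a = k := by
  rw [round_eq, Int.floor_eq_iff]
  · exact ⟨h1, h2⟩

lemma sg_upslope (k : ℤ) {a : ℝ} (h1 : (k:ℝ) < a) (h2 : a < k + 1/2) :
    ∀ᶠ b in nhds a, sg b = b - k := by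
  have hmem : Set.Ioo ((k:ℝ)) (k + 1/2) ∈ nhds a := isOpen_Ioo.mem_nhds ⟨h1, h2⟩
  filter_upwards [hmem] with b hb
  have hr : round b = k := round_eq_of b k (by push_cast; linarith [hb.1]) (by push_cast; linarith [hb.2])
  rw [sg, hr, abs_of_pos]; linarith [hb.1]

lemma sg_downslope (k : ℤ) {a : ℝ} (h1 : (k:ℝ) + 1/2 < a) (h2 : a < k + 1) :
    ∀ᶠ b in nhds a, sg b = (k:ℝ) + 1 - b := by
  have hmem : Set.Ioo ((k:ℝ) + 1/2) (k + 1) ∈ nhds a := isOpen_Ioo.mem_nhds ⟨h1, h2⟩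
  filter_upwards [hmem] with b hb
  have hr : round b = k + 1 := round_eq_of b (k+1) (by push_cast; linarith [hb.1]) (by push_cast; linarith [hb.2])
  rw [sg, hr]
  rw [abs_of_nonpos (by push_cast; linarith [hb.2])]
  push_cast; ring

lemma sg_ge_min (k : ℤ) (a : ℝ) : min (a - k) ((k:ℝ) + 1 - a) ≤ sg a := by
  rcases le_or_gt (round a) k with h | h
  · have : (round a : ℝ) ≤ k := by exact_mod_cast h
    calc min (a - k) ((k:ℝ)+1-a) ≤ a - k := min_le_left _ _
      _ ≤ a - round a := by linarith
      _ ≤ sg a := le_abs_self _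
  · have : (k:ℝ) + 1 ≤ round a := by exact_mod_cast h
    calc min (a - k) ((k:ℝ)+1-a) ≤ (k:ℝ)+1-a := min_le_right _ _
      _ ≤ (round a : ℝ) - a := by linarith
      _ ≤ sg a := by rw [sg, abs_sub_comm]; exact le_abs_self _

abbrev E2 := EuclideanSpace ℝ (Fin 2)

lemma coord_lipschitz (i : Fin 2) : LipschitzWith 1 (fun x : E2 => x i) := by
  apply LipschitzWith.of_dist_le_mul
  intro a b
  rw [NNReal.coe_one, one_mul, EuclideanSpace.dist_eq]
  have h1 : dist (a i) (b i) ^ 2 ≤ ∑ j, dist (a j) (b j) ^ 2 := by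
    apply Finset.single_le_sum (f := fun j => dist (a j) (b j) ^ 2)
    · intro j _; positivity
    · exact Finset.mem_univ i
  calc dist (a i) (b i) = Real.sqrt (dist (a i) (b i) ^ 2) := by
        rw [Real.sqrt_sq dist_nonneg]
    _ ≤ _ := Real.sqrt_le_sqrt h1

def ELip (f : E2 → ℝ) : Prop := ∃ K : NNReal, LipschitzWith K f

lemma ELip.add {f g : E2 → ℝ} (hf : ELip f) (hg : ELip g) : ELip (fun x => f x + g x) := by
  obtain ⟨K, hK⟩ := hf; obtain ⟨K', hK'⟩ := hg; exact ⟨K + K', hK.add hK'⟩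

lemma ELip.min {f g : E2 → ℝ} (hf : ELip f) (hg : ELip g) : ELip (fun x => min (f x) (g x)) := by
  obtain ⟨K, hK⟩ := hf; obtain ⟨K', hK'⟩ := hg; exact ⟨K ⊔ K', hK.min hK'⟩

lemma ELip.max {f g : E2 → ℝ} (hf : ELip f) (hg : ELip g) : ELip (fun x => max (f x) (g x)) := by
  obtain ⟨K, hK⟩ := hf; obtain ⟨K', hK'⟩ := hg; exact ⟨K ⊔ K', hK.max hK'⟩

lemma ELip.const (c : ℝ) : ELip (fun _ => c) := ⟨0, LipschitzWith.const c⟩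

lemma ELip.coord (i : Fin 2) : ELip (fun x : E2 => x i) := ⟨1, coord_lipschitz i⟩

lemma ELip.const_mul {f : E2 → ℝ} (hf : ELip f) (c : ℝ) : ELip (fun x => c * f x) := by
  obtain ⟨K, hK⟩ := hf
  refine ⟨‖c‖₊ * K, LipschitzWith.of_dist_le_mul fun a b => ?_⟩
  have h2 := hK.dist_le_mul a b
  calc dist (c * f a) (c * f b) = |c| * dist (f a) (f b) := by
        rw [Real.dist_eq, Real.dist_eq, ← abs_mul]; ring_nf
    _ ≤ |c| * (K * dist a b) := mul_le_mul_of_nonneg_left h2 (abs_nonneg c)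
    _ = ↑(‖c‖₊ * K) * dist a b := by push_cast [Real.norm_eq_abs]; ring

lemma ELip.sg_comp {f : E2 → ℝ} (hf : ELip f) : ELip (fun x => sg (f x)) := by
  obtain ⟨K, hK⟩ := hf; exact ⟨1 * K, sg_lipschitz.comp hK⟩

lemma ELip.sub {f g : E2 → ℝ} (hf : ELip f) (hg : ELip g) : ELip (fun x => f x - g x) := by
  have h := hf.add (hg.const_mul (-1))
  simpa [sub_eq_add_neg, neg_one_mul] using h

lemma ELip.continuous {f : E2 → ℝ} (hf : ELip f) : Continuous f := by
  obtain ⟨K, hK⟩ := hf; exact hK.continuous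

lemma pair_lip {u v : E2 → ℝ} (hu : ELip u) (hv : ELip v) :
    ∃ K : NNReal, LipschitzWith K
      (fun x : E2 => ((WithLp.equiv 2 (Fin 2 → ℝ)).symm ![u x, v x] : E2)) := by
  obtain ⟨K, hK⟩ := hu; obtain ⟨K', hK'⟩ := hv
  refine ⟨K + K', LipschitzWith.of_dist_le_mul fun a b => ?_⟩
  have hcoord : ∀ x : E2, ∀ i : Fin 2,
      ((WithLp.equiv 2 (Fin 2 → ℝ)).symm ![u x, v x] : E2) i = ![u x, v x] i :=
    fun x i => rfl
  rw [EuclideanSpace.dist_eq]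
  have hsum : ∑ i, dist (((WithLp.equiv 2 (Fin 2 → ℝ)).symm ![u a, v a] : E2) i)
      (((WithLp.equiv 2 (Fin 2 → ℝ)).symm ![u b, v b] : E2) i) ^ 2
      = dist (u a) (u b) ^ 2 + dist (v a) (v b) ^ 2 := by
    rw [Fin.sum_univ_two]
    simp [hcoord]
  rw [hsum]
  have h1 := hK.dist_le_mul a b
  have h2 := hK'.dist_le_mul a b
  have key : Real.sqrt (dist (u a) (u b) ^ 2 + dist (v a) (v b) ^ 2)
      ≤ dist (u a) (u b) + dist (v a) (v b) := by
    rw [show dist (u a) (u b) + dist (v a) (v b)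
        = Real.sqrt ((dist (u a) (u b) + dist (v a) (v b)) ^ 2) by
      rw [Real.sqrt_sq (by positivity)]]
    apply Real.sqrt_le_sqrt
    nlinarith [dist_nonneg (x := u a) (y := u b), dist_nonneg (x := v a) (y := v b)]
  calc Real.sqrt _ ≤ dist (u a) (u b) + dist (v a) (v b) := key
    _ ≤ K * dist a b + K' * dist a b := add_le_add h1 h2
    _ = ↑(K + K') * dist a b := by push_cast; ring
lemma ELip.div_const {f : E2 → ℝ} (hf : ELip f) (c : ℝ) : ELip (fun x => f x / c) := by
  have h := hf.const_mul c⁻¹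
  simpa [div_eq_inv_mul] using h

noncomputable def uu (n : ℕ) (x : E2) : ℝ :=
  x 0 / 2 + min (min (sg ((n:ℝ) * x 0 + 1/4) / (2*n)) (min (x 1) (1 - x 1)))
    (min (x 0) (1 - x 0))

noncomputable def vv (n N : ℕ) (x : E2) : ℝ :=
  x 1 + min (sg ((N:ℝ) * x 1) / N) (max 0 (sg ((n:ℝ) * x 0) - 1/4) / n)

noncomputable def yy (n N : ℕ) (x : E2) : E2 :=
  (WithLp.equiv 2 (Fin 2 → ℝ)).symm ![uu n x, vv n N x]

lemma uu_lip (n : ℕ) : ELip (uu n) := by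
  apply ELip.add
  · simpa [div_eq_inv_mul] using (ELip.coord 0).const_mul (1/2 : ℝ)
  · apply ELip.min
    · apply ELip.min
      · apply ELip.div_const
        apply ELip.sg_comp
        exact (((ELip.coord 0).const_mul _).add (ELip.const _))
      · exact (ELip.coord 1).min ((ELip.const 1).sub (ELip.coord 1))
    · exact (ELip.coord 0).min ((ELip.const 1).sub (ELip.coord 0))

lemma vv_lip (n N : ℕ) : ELip (vv n N) := by
  apply ELip.add
  · exact ELip.coord 1
  · apply ELip.min
    · exact (((ELip.coord 1).const_mul _).sg_comp).div_const _
    · exact (((ELip.const 0).max ((((ELip.coord 0).const_mul _).sg_comp).sub (ELip.const _)))).div_const _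

lemma yy_lip (n N : ℕ) : ∃ K : NNReal, LipschitzWith K (yy n N) := by
  have h := pair_lip (uu_lip n) (vv_lip n N)
  exact h

lemma min3_zero {a b c : ℝ} (ha : 0 ≤ a) (hb : 0 ≤ b) (hc : 0 ≤ c)
    (h : a = 0 ∨ b = 0 ∨ c = 0) : min (min a b) c = 0 := by
  apply le_antisymm
  · rcases h with h | h | h
    · exact le_trans (min_le_left _ _) (by rw [← h]; exact min_le_left _ _)
    · exact le_trans (min_le_left _ _) (by rw [← h]; exact min_le_right _ _)
    · rw [← h]; exact min_le_right _ _
  · exact le_min (le_min ha hb) hc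

lemma min2_zero {a b : ℝ} (ha : 0 ≤ a) (hb : 0 ≤ b) (h : a = 0 ∨ b = 0) : min a b = 0 := by
  apply le_antisymm
  · rcases h with h | h
    · rw [← h]; exact min_le_left _ _
    · rw [← h]; exact min_le_right _ _
  · exact le_min ha hb

lemma uu_boundary (n : ℕ) (x : E2) (h0 : x 0 ∈ Set.Icc (0:ℝ) 1) (h1 : x 1 ∈ Set.Icc (0:ℝ) 1)
    (h : x 0 = 0 ∨ x 0 = 1 ∨ x 1 = 0 ∨ x 1 = 1) : uu n x = x 0 / 2 := by
  have hA : 0 ≤ sg ((n:ℝ) * x 0 + 1/4) / (2*n) := div_nonneg (sg_nonneg _) (by positivity)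
  have hB : 0 ≤ min (x 1) (1 - x 1) := le_min h1.1 (by linarith [h1.2])
  have hC : 0 ≤ min (x 0) (1 - x 0) := le_min h0.1 (by linarith [h0.2])
  have key : min (min (sg ((n:ℝ) * x 0 + 1/4) / (2*n)) (min (x 1) (1 - x 1)))
      (min (x 0) (1 - x 0)) = 0 := by
    apply min3_zero hA hB hC
    rcases h with h | h | h | h
    · right; right; apply min2_zero h0.1 (by linarith [h0.2]); left; exact h
    · right; right; apply min2_zero h0.1 (by linarith [h0.2]); right; rw [h]; ring
    · right; left; apply min2_zero h1.1 (by linarith [h1.2]); left; exact h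
    · right; left; apply min2_zero h1.1 (by linarith [h1.2]); right; rw [h]; ring
  rw [uu, key, add_zero]

lemma vv_boundary (n N : ℕ) (x : E2)
    (h : x 0 = 0 ∨ x 0 = 1 ∨ x 1 = 0 ∨ x 1 = 1) : vv n N x = x 1 := by
  have hT : 0 ≤ sg ((N:ℝ) * x 1) / N := div_nonneg (sg_nonneg _) (by positivity)
  have hW : 0 ≤ max 0 (sg ((n:ℝ) * x 0) - 1/4) / n :=
    div_nonneg (le_max_left _ _) (by positivity)
  have key : min (sg ((N:ℝ) * x 1) / N) (max 0 (sg ((n:ℝ) * x 0) - 1/4) / n) = 0 := by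
    apply min2_zero hT hW
    rcases h with h | h | h | h
    · right
      have : sg ((n:ℝ) * x 0) = 0 := sg_int _ 0 (by rw [h]; simp)
      rw [this]
      norm_num
    · right
      have : sg ((n:ℝ) * x 0) = 0 := sg_int _ (n:ℤ) (by rw [h]; simp)
      rw [this]
      norm_num
    · left
      have : sg ((N:ℝ) * x 1) = 0 := sg_int _ 0 (by rw [h]; simp)
      rw [this, zero_div]
    · left
      have : sg ((N:ℝ) * x 1) = 0 := sg_int _ (N:ℤ) (by rw [h]; simp)
      rw [this, zero_div]
  rw [vv, key, add_zero]

lemma toCLM_apply {m n : ℕ} (A : Matrix (Fin m) (Fin n) ℝ) (x : EuclideanSpace ℝ (Fin n))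
    (i : Fin m) : toCLM A x i = ∑ j, A i j * x j := by
  show Matrix.toEuclideanLin A x i = _
  rw [Matrix.toEuclideanLin_apply]
  rfl

lemma toCLM_single {m n : ℕ} (A : Matrix (Fin m) (Fin n) ℝ) (j : Fin n) (i : Fin m) :
    toCLM A (EuclideanSpace.single j 1) i = A i j := by
  rw [toCLM_apply]
  rw [Finset.sum_eq_single j]
  · simp [EuclideanSpace.single_apply]
  · intro b _ hb
    simp [EuclideanSpace.single_apply, hb]
  · simp

lemma dmat_of_eventually {yf : E2 → E2} {x : E2} {M : Matrix (Fin 2) (Fin 2) ℝ} {c : E2}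
    (h : yf =ᶠ[nhds x] fun z => toCLM M z + c) : Dmat yf x = M := by
  have hf : fderiv ℝ yf x = toCLM M := by
    rw [h.fderiv_eq, fderiv_add_const, (toCLM M).fderiv]
  ext i j
  show fderiv ℝ yf x (EuclideanSpace.single j 1) i = M i j
  rw [hf, toCLM_single]

lemma frobNorm_zero {m n : ℕ} : frobNorm (0 : Matrix (Fin m) (Fin n) ℝ) = 0 := by
  simp [frobNorm]

lemma frobNorm_sub_self {m n : ℕ} (A : Matrix (Fin m) (Fin n) ℝ) : frobNorm (A - A) = 0 := by
  rw [sub_self, frobNorm_zero]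

lemma coord_continuous (i : Fin 2) : Continuous (fun x : E2 => x i) :=
  (coord_lipschitz i).continuous

lemma eventually_min_left {f g : E2 → ℝ} {x : E2} (hf : ContinuousAt f x)
    (hg : ContinuousAt g x) (h : f x < g x) :
    (fun z => min (f z) (g z)) =ᶠ[nhds x] f := by
  have hev : ∀ᶠ z in nhds x, f z < g z := hf.eventually_lt hg h
  filter_upwards [hev] with z hz
  exact min_eq_left hz.le

-- combine coordinates into the affine form
lemma yy_eq_affine {n N : ℕ} (M : Matrix (Fin 2) (Fin 2) ℝ) (c0 c1 : ℝ) (z : E2)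
    (h0 : uu n z = (M 0 0 * z 0 + M 0 1 * z 1) + c0)
    (h1 : vv n N z = (M 1 0 * z 0 + M 1 1 * z 1) + c1) :
    yy n N z = toCLM M z + (WithLp.equiv 2 (Fin 2 → ℝ)).symm ![c0, c1] := by
  have hco : ∀ i, (toCLM M z + (WithLp.equiv 2 (Fin 2 → ℝ)).symm ![c0, c1]) i
      = toCLM M z i + ![c0, c1] i := fun i => rfl
  refine PiLp.ext fun i => ?_
  fin_cases i
  · show uu n z = _
    rw [hco, toCLM_apply, Fin.sum_univ_two]
    simpa using h0
  · show vv n N z = _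
    rw [hco, toCLM_apply, Fin.sum_univ_two]
    simpa using h1

section Regions
variable {n N : ℕ} (hn : 1 ≤ n) (hN : 1 ≤ N) {x : E2}

-- continuity facts
lemma contS (n : ℕ) : Continuous (fun z : E2 => sg ((n:ℝ) * z 0 + 1/4) / (2*(n:ℝ))) := by
  apply Continuous.div_const
  exact sg_lipschitz.continuous.comp ((continuous_const.mul (coord_continuous 0)).add continuous_const)

lemma contB : Continuous (fun z : E2 => min (z 1) (1 - z 1)) :=
  (coord_continuous 1).min (continuous_const.sub (coord_continuous 1))

lemma contC : Continuous (fun z : E2 => min (z 0) (1 - z 0)) :=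
  (coord_continuous 0).min (continuous_const.sub (coord_continuous 0))

lemma contT (N : ℕ) : Continuous (fun z : E2 => sg ((N:ℝ) * z 1) / (N:ℝ)) := by
  apply Continuous.div_const
  exact sg_lipschitz.continuous.comp (continuous_const.mul (coord_continuous 1))

lemma contW (n : ℕ) : Continuous (fun z : E2 => max 0 (sg ((n:ℝ) * z 0) - 1/4) / (n:ℝ)) := by
  apply Continuous.div_const
  exact continuous_const.max
    ((sg_lipschitz.continuous.comp (continuous_const.mul (coord_continuous 0))).sub continuous_const)

-- u is locally z0/2 + S z when S is strictly smallest
lemma uu_loc (hn : 1 ≤ n) {x : E2}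
    (hB : sg ((n:ℝ) * x 0 + 1/4) / (2*n) < min (x 1) (1 - x 1))
    (hC : sg ((n:ℝ) * x 0 + 1/4) / (2*n) < min (x 0) (1 - x 0)) :
    uu n =ᶠ[nhds x] fun z => z 0 / 2 + sg ((n:ℝ) * z 0 + 1/4) / (2*n) := by
  have ev1 : (fun z : E2 => min (sg ((n:ℝ) * z 0 + 1/4) / (2*n)) (min (z 1) (1 - z 1)))
      =ᶠ[nhds x] fun z => sg ((n:ℝ) * z 0 + 1/4) / (2*n) :=
    eventually_min_left (contS n).continuousAt contB.continuousAt hB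
  have ev2 : (fun z : E2 => min (min (sg ((n:ℝ) * z 0 + 1/4) / (2*n)) (min (z 1) (1 - z 1)))
      (min (z 0) (1 - z 0)))
      =ᶠ[nhds x] fun z => min (sg ((n:ℝ) * z 0 + 1/4) / (2*n)) (min (z 1) (1 - z 1)) := by
    apply eventually_min_left ((contS n).min contB).continuousAt contC.continuousAt
    exact lt_of_le_of_lt (min_le_left _ _) hC
  filter_upwards [ev1, ev2] with z h1 h2
  rw [uu, h2, h1]

-- bounds on S x
lemma S_le (n : ℕ) (hn : 1 ≤ n) (x : E2) :
    sg ((n:ℝ) * x 0 + 1/4) / (2*n) ≤ 1/(4*n) := by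
  have npos : (0:ℝ) < n := by exact_mod_cast hn
  rw [div_le_div_iff₀ (by positivity) (by positivity)]
  nlinarith [sg_le_half ((n:ℝ) * x 0 + 1/4)]


-- REGION A
lemma regionA (hn : 1 ≤ n) {x : E2} (k : ℤ) (hk1 : 1 ≤ k) (hk2 : (k:ℝ) ≤ (n:ℝ) - 1)
    (hx0 : x 0 ∈ Ioo ((k:ℝ)/n - 1/(4*n)) ((k:ℝ)/n + 1/(4*n)))
    (hx1 : x 1 ∈ Ioo (1/(4*(n:ℝ))) (1 - 1/(4*n))) :
    ∃ c : E2, yy n N =ᶠ[nhds x] fun z => toCLM (1 : Matrix (Fin 2) (Fin 2) ℝ) z + c := by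
  have npos : (0:ℝ) < n := by exact_mod_cast hn
  have hk1' : (1:ℝ) ≤ (k:ℝ) := by exact_mod_cast hk1
  -- bounds on w := n * x 0
  have hwl : (k:ℝ) - 1/4 < n * x 0 := by
    have h := mul_lt_mul_of_pos_right hx0.1 npos
    rw [sub_mul, div_mul_cancel₀ _ (ne_of_gt npos)] at h
    have h4 : 1/(4*(n:ℝ)) * n = 1/4 := by field_simp
    nlinarith
  have hwr : (n:ℝ) * x 0 < k + 1/4 := by
    have h := mul_lt_mul_of_pos_right hx0.2 npos
    rw [add_mul, div_mul_cancel₀ _ (ne_of_gt npos)] at h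
    have h4 : 1/(4*(n:ℝ)) * n = 1/4 := by field_simp
    nlinarith
  -- x 0 and 1 - x 0 bounds
  have hx0gt : 1/(4*(n:ℝ)) < x 0 := by
    rw [div_lt_iff₀ (by positivity)]
    nlinarith
  have hx0lt : 1/(4*(n:ℝ)) < 1 - x 0 := by
    rw [div_lt_iff₀ (by positivity)]
    nlinarith
  have hS := S_le n hn x
  have hB : sg ((n:ℝ) * x 0 + 1/4) / (2*n) < min (x 1) (1 - x 1) :=
    lt_of_le_of_lt hS (lt_min hx1.1 (by linarith [hx1.2]))
  have hC : sg ((n:ℝ) * x 0 + 1/4) / (2*n) < min (x 0) (1 - x 0) :=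
    lt_of_le_of_lt hS (lt_min hx0gt (by linarith))
  have evu0 := uu_loc hn hB hC
  -- up-slope for S
  have hup := sg_upslope k (by linarith : (k:ℝ) < (n:ℝ) * x 0 + 1/4)
    (by linarith : (n:ℝ) * x 0 + 1/4 < k + 1/2)
  have hcont0 : ContinuousAt (fun z : E2 => (n:ℝ) * z 0 + 1/4) x :=
    ((continuous_const.mul (coord_continuous 0)).add continuous_const).continuousAt
  have evS : ∀ᶠ z in nhds x, sg ((n:ℝ) * z 0 + 1/4) = ((n:ℝ) * z 0 + 1/4) - k :=
    hcont0.eventually hup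
  -- v part : W = 0 locally
  have hsgx : sg ((n:ℝ) * x 0) < 1/4 := by
    apply lt_of_le_of_lt (sg_le _ k)
    rw [abs_sub_lt_iff]
    constructor <;> nlinarith
  have hcontsg : ContinuousAt (fun z : E2 => sg ((n:ℝ) * z 0)) x :=
    (sg_lipschitz.continuous.comp (continuous_const.mul (coord_continuous 0))).continuousAt
  have evW : ∀ᶠ z in nhds x, sg ((n:ℝ) * z 0) < 1/4 :=
    hcontsg.eventually_lt continuousAt_const hsgx
  refine ⟨(WithLp.equiv 2 (Fin 2 → ℝ)).symm ![(1/4 - (k:ℝ))/(2*n), 0], ?_⟩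
  filter_upwards [evu0, evS, evW] with z h1 h2 h3
  apply yy_eq_affine
  · rw [h1, h2]
    have : (1:Matrix (Fin 2) (Fin 2) ℝ) 0 0 = 1 := rfl
    rw [this]
    have : (1:Matrix (Fin 2) (Fin 2) ℝ) 0 1 = 0 := rfl
    rw [this]
    field_simp
    ring
  · have hWz : max 0 (sg ((n:ℝ) * z 0) - 1/4) = 0 := max_eq_left (by linarith)
    rw [vv, hWz, zero_div, min_eq_right (div_nonneg (sg_nonneg _) (by positivity))]
    have : (1:Matrix (Fin 2) (Fin 2) ℝ) 1 0 = 0 := rfl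
    rw [this]
    have : (1:Matrix (Fin 2) (Fin 2) ℝ) 1 1 = 1 := rfl
    rw [this]
    ring


-- REGION B
lemma regionB (hn : 1 ≤ n) (hN : 1 ≤ N) {x : E2} (k : ℤ) (hk1 : 0 ≤ k) (hk2 : (k:ℝ) ≤ (n:ℝ) - 1)
    (hx0 : x 0 ∈ Ioo ((k:ℝ)/n + 1/(4*n) + 1/N) ((k:ℝ)/n + 3/(4*n) - 1/N))
    (hx1 : x 1 ∈ Ioo (1/(4*(n:ℝ))) (1 - 1/(4*n)))
    (hx1' : ∀ l : ℤ, x 1 ≠ l/(2*N)) :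
    (∃ c : E2, yy n N =ᶠ[nhds x] fun z => toCLM (0 : Matrix (Fin 2) (Fin 2) ℝ) z + c) ∨
    (∃ c : E2, yy n N =ᶠ[nhds x] fun z =>
      toCLM ((2:ℝ) • Matrix.vecMulVec ![(0:ℝ), 1] ![(0:ℝ), 1]) z + c) := by
  have npos : (0:ℝ) < n := by exact_mod_cast hn
  have Npos : (0:ℝ) < N := by exact_mod_cast hN
  have hk1' : (0:ℝ) ≤ (k:ℝ) := by exact_mod_cast hk1
  -- bounds on w := n * x 0
  have hwl : (k:ℝ) + 1/4 + n/N < n * x 0 := by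
    have h := mul_lt_mul_of_pos_right hx0.1 npos
    rw [add_mul, add_mul, div_mul_cancel₀ _ (ne_of_gt npos)] at h
    have h4 : 1/(4*(n:ℝ)) * n = 1/4 := by field_simp
    have h5 : 1/(N:ℝ) * n = n/N := by field_simp
    nlinarith
  have hwr : (n:ℝ) * x 0 < k + 3/4 - n/N := by
    have h := mul_lt_mul_of_pos_right hx0.2 npos
    rw [sub_mul, add_mul, div_mul_cancel₀ _ (ne_of_gt npos)] at h
    have h4 : 3/(4*(n:ℝ)) * n = 3/4 := by field_simp
    have h5 : 1/(N:ℝ) * n = n/N := by field_simp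
    nlinarith
  have hnN : 0 < (n:ℝ)/N := by positivity
  -- x 0 and 1 - x 0 bounds
  have hx0gt : 1/(4*(n:ℝ)) < x 0 := by
    rw [div_lt_iff₀ (by positivity)]
    nlinarith
  have hx0lt : 1/(4*(n:ℝ)) < 1 - x 0 := by
    rw [div_lt_iff₀ (by positivity)]
    nlinarith
  have hS := S_le n hn x
  have hB : sg ((n:ℝ) * x 0 + 1/4) / (2*n) < min (x 1) (1 - x 1) :=
    lt_of_le_of_lt hS (lt_min hx1.1 (by linarith [hx1.2]))
  have hC : sg ((n:ℝ) * x 0 + 1/4) / (2*n) < min (x 0) (1 - x 0) :=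
    lt_of_le_of_lt hS (lt_min hx0gt (by linarith))
  have evu0 := uu_loc hn hB hC
  -- down-slope for S : sg (n z0 + 1/4) = (k+1) - (n z0 + 1/4)
  have hdn := sg_downslope k (by push_cast; linarith : (k:ℝ) + 1/2 < (n:ℝ) * x 0 + 1/4)
    (by push_cast; linarith : (n:ℝ) * x 0 + 1/4 < k + 1)
  have hcont0 : ContinuousAt (fun z : E2 => (n:ℝ) * z 0 + 1/4) x :=
    ((continuous_const.mul (coord_continuous 0)).add continuous_const).continuousAt
  have evS : ∀ᶠ z in nhds x, sg ((n:ℝ) * z 0 + 1/4) = (k:ℝ) + 1 - ((n:ℝ) * z 0 + 1/4) :=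
    hcont0.eventually hdn
  -- so u is locally constant:
  have evu : uu n =ᶠ[nhds x] fun _ => ((k:ℝ) + 3/4)/(2*n) := by
    filter_upwards [evu0, evS] with z h1 h2
    rw [h1, h2]
    field_simp
    ring
  -- v part : min (t z) (W z) = t z eventually
  have htx : sg ((N:ℝ) * x 1) / N ≤ 1/(2*N) := by
    rw [div_le_div_iff₀ (by positivity) (by positivity)]
    nlinarith [sg_le_half ((N:ℝ) * x 1)]
  have hWx : 1/(N:ℝ) < max 0 (sg ((n:ℝ) * x 0) - 1/4) / n := by
    have hge : min ((n:ℝ) * x 0 - k) ((k:ℝ) + 1 - n * x 0) ≤ sg ((n:ℝ) * x 0) := sg_ge_min k _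
    have hmin : 1/4 + (n:ℝ)/N < min ((n:ℝ) * x 0 - k) ((k:ℝ) + 1 - n * x 0) :=
      lt_min (by linarith) (by linarith)
    rw [lt_div_iff₀ npos]
    calc 1/(N:ℝ) * n = n/N := by field_simp
      _ < sg ((n:ℝ) * x 0) - 1/4 := by linarith
      _ ≤ max 0 (sg ((n:ℝ) * x 0) - 1/4) := le_max_right _ _
  have htW : sg ((N:ℝ) * x 1) / N < max 0 (sg ((n:ℝ) * x 0) - 1/4) / n := by
    apply lt_of_le_of_lt htx
    apply lt_trans _ hWx
    rw [div_lt_div_iff₀ (by positivity) (by positivity)]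
    nlinarith
  have evmin : (fun z : E2 => min (sg ((N:ℝ) * z 1) / N) (max 0 (sg ((n:ℝ) * z 0) - 1/4) / n))
      =ᶠ[nhds x] fun z => sg ((N:ℝ) * z 1) / N :=
    eventually_min_left (contT N).continuousAt (contW n).continuousAt htW
  -- slope cases for t
  set l : ℤ := ⌊(N:ℝ) * x 1⌋ with hl
  have hfl : (l:ℝ) ≤ (N:ℝ) * x 1 := Int.floor_le _
  have hfl2 : (N:ℝ) * x 1 < l + 1 := Int.lt_floor_add_one _
  have hne0 : (N:ℝ) * x 1 ≠ l := by
    intro h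
    apply hx1' (2*l)
    rw [_root_.eq_div_iff (by positivity)]
    push_cast
    linarith [h]
  have hneh : (N:ℝ) * x 1 ≠ l + 1/2 := by
    intro h
    apply hx1' (2*l + 1)
    rw [_root_.eq_div_iff (by positivity)]
    push_cast
    linarith [h]
  have hcont1 : ContinuousAt (fun z : E2 => (N:ℝ) * z 1) x :=
    (continuous_const.mul (coord_continuous 1)).continuousAt
  rcases lt_or_gt_of_ne hneh with hcase | hcase
  · -- up-slope: t z = (N z1 - l)/N, v = 2 z1 - l/N
    right
    have hup := sg_upslope l (lt_of_le_of_ne hfl (Ne.symm hne0)) hcase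
    have evT : ∀ᶠ z in nhds x, sg ((N:ℝ) * z 1) = (N:ℝ) * z 1 - l := hcont1.eventually hup
    refine ⟨(WithLp.equiv 2 (Fin 2 → ℝ)).symm ![((k:ℝ) + 3/4)/(2*n), -(l:ℝ)/N], ?_⟩
    filter_upwards [evu, evmin, evT] with z h1 h2 h3
    apply yy_eq_affine
    · rw [h1]
      simp [Matrix.smul_apply, Matrix.vecMulVec_apply]
    · rw [vv, h2, h3]
      simp only [Matrix.smul_apply, Matrix.vecMulVec_apply]
      have e0 : (![(0:ℝ), 1] 1 : ℝ) = 1 := rfl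
      have e1 : (![(0:ℝ), 1] 0 : ℝ) = 0 := rfl
      rw [e0, e1]
      field_simp
      ring
  · -- down-slope: t z = (l+1 - N z1)/N, v = (l+1)/N constant
    left
    have hdn2 := sg_downslope l hcase (by linarith)
    have evT : ∀ᶠ z in nhds x, sg ((N:ℝ) * z 1) = (l:ℝ) + 1 - (N:ℝ) * z 1 := hcont1.eventually hdn2
    refine ⟨(WithLp.equiv 2 (Fin 2 → ℝ)).symm ![((k:ℝ) + 3/4)/(2*n), ((l:ℝ)+1)/N], ?_⟩
    filter_upwards [evu, evmin, evT] with z h1 h2 h3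
    apply yy_eq_affine
    · rw [h1]
      simp
    · rw [vv, h2, h3]
      simp only [Matrix.zero_apply]
      field_simp
      ring

end Regions
lemma vol_R2 (I J : Set ℝ) (hI : MeasurableSet I) (hJ : MeasurableSet J) :
    volume {x : E2 | x 0 ∈ I ∧ x 1 ∈ J} = volume I * volume J := by
  have hmp := EuclideanSpace.volume_preserving_symm_measurableEquiv_toLp (ι := Fin 2)
  have hset : {x : E2 | x 0 ∈ I ∧ x 1 ∈ J}
      = (MeasurableEquiv.toLp 2 (Fin 2 → ℝ)).symm ⁻¹' (Set.univ.pi ![I, J]) := by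
    ext x
    simp only [Set.mem_preimage, Set.mem_pi, Set.mem_univ, forall_true_left, Set.mem_setOf_eq]
    constructor
    · rintro ⟨h0, h1⟩ i
      fin_cases i <;> [exact h0; exact h1]
    · intro h
      exact ⟨h 0, h 1⟩
  rw [hset, hmp.measure_preimage]
  · rw [volume_pi_pi]
    rw [Fin.prod_univ_two]
    rfl
  · apply MeasurableSet.nullMeasurableSet
    apply MeasurableSet.univ_pi
    intro i
    fin_cases i <;> [exact hI; exact hJ]

lemma Ioo_disj {a b c d : ℝ} (h : b ≤ c) : Disjoint (Ioo a b) (Ioo c d) := by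
  apply Set.disjoint_left.mpr
  intro x h1 h2
  linarith [h1.2, h2.1]

lemma vol_union_Ioo (s : Finset ℤ) (a b : ℤ → ℝ) (len : ℝ)
    (hlen : ∀ k ∈ s, b k - a k = len)
    (hdisj : (s:Set ℤ).PairwiseDisjoint (fun k => Ioo (a k) (b k))) :
    volume (⋃ k ∈ s, Ioo (a k) (b k)) = s.card * ENNReal.ofReal len := by
  rw [measure_biUnion_finset hdisj (fun k _ => measurableSet_Ioo)]
  rw [Finset.sum_congr rfl (fun k hk => by rw [Real.volume_Ioo, hlen k hk])]
  rw [Finset.sum_const, nsmul_eq_mul]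

lemma vol_hyperplane (c : ℝ) : volume {x : E2 | x 1 = c} = 0 := by
  have : {x : E2 | x 1 = c} = {x : E2 | x 0 ∈ (Set.univ : Set ℝ) ∧ x 1 ∈ ({c} : Set ℝ)} := by
    ext x; simp
  rw [this, vol_R2 _ _ MeasurableSet.univ (measurableSet_singleton c)]
  simp

lemma vol_Z (N : ℕ) : volume (⋃ l : ℤ, {x : E2 | x 1 = (l:ℝ)/(2*N)}) = 0 :=
  measure_iUnion_null fun l => vol_hyperplane _

-- volume of the A-strip union
lemma vol_IA (n : ℕ) (hn : 1 ≤ n) :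
    volume (⋃ k ∈ Finset.Icc (1:ℤ) (n-1),
      Ioo ((k:ℝ)/n - 1/(4*n)) ((k:ℝ)/n + 1/(4*n))) = (n-1 : ℕ) * ENNReal.ofReal (1/(2*n)) := by
  have npos : (0:ℝ) < n := by exact_mod_cast hn
  rw [vol_union_Ioo _ _ _ (1/(2*(n:ℝ)))
    (fun k _ => by field_simp; ring)
    ?_]
  · congr 1
    rw [Int.card_Icc]
    congr 1
    omega
  · intro i _ j _ hij
    have key : ∀ p q : ℤ, p < q → ((p:ℝ)/n + 1/(4*n)) ≤ ((q:ℝ)/n - 1/(4*n)) := by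
      intro p q hpq
      have hpq' : (p:ℝ) + 1 ≤ q := by exact_mod_cast hpq
      have e1 : (p:ℝ)/n + 1/(4*n) = ((p:ℝ)+1/4)/n := by field_simp
      have e2 : (q:ℝ)/n - 1/(4*n) = ((q:ℝ)-1/4)/n := by field_simp
      rw [e1, e2, div_le_div_iff₀ npos npos]
      nlinarith
    rcases lt_or_gt_of_ne hij with h | h
    · exact Ioo_disj (key i j h)
    · exact (Ioo_disj (key j i h)).symm

-- volume of the B-strip union
lemma vol_IB (n N : ℕ) (hn : 1 ≤ n) (hN : 1 ≤ N) :
    volume (⋃ k ∈ Finset.Icc (0:ℤ) (n-1),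
      Ioo ((k:ℝ)/n + 1/(4*n) + 1/N) ((k:ℝ)/n + 3/(4*n) - 1/N))
      = (n : ℕ) * ENNReal.ofReal (1/(2*n) - 2/N) := by
  have npos : (0:ℝ) < n := by exact_mod_cast hn
  have Npos : (0:ℝ) < N := by exact_mod_cast hN
  rw [vol_union_Ioo _ _ _ (1/(2*(n:ℝ)) - 2/N)
    (fun k _ => by field_simp; ring)
    ?_]
  · congr 1
    rw [Int.card_Icc]
    congr 1
    omega
  · intro i _ j _ hij
    have key : ∀ p q : ℤ, p < q →
        ((p:ℝ)/n + 3/(4*n) - 1/N) ≤ ((q:ℝ)/n + 1/(4*n) + 1/N) := by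
      intro p q hpq
      have hpq' : (p:ℝ) + 1 ≤ q := by exact_mod_cast hpq
      have e1 : (p:ℝ)/n + 3/(4*n) = ((p:ℝ)+3/4)/n := by field_simp
      have e2 : (q:ℝ)/n + 1/(4*n) = ((q:ℝ)+1/4)/n := by field_simp
      have e3 : ((p:ℝ)+3/4)/n ≤ ((q:ℝ)+1/4)/n := by
        rw [div_le_div_iff₀ npos npos]
        nlinarith
      have : (0:ℝ) < 1/N := by positivity
      linarith
    rcases lt_or_gt_of_ne hij with h | h
    · exact Ioo_disj (key i j h)
    · exact (Ioo_disj (key j i h)).symm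

def Qset : Set E2 := {x : E2 | x 0 ∈ Set.Ioo (0:ℝ) 1 ∧ x 1 ∈ Set.Ioo (0:ℝ) 1}

lemma Q_open : IsOpen Qset := by
  have : Qset = (fun x : E2 => x 0) ⁻¹' (Ioo 0 1) ∩ (fun x : E2 => x 1) ⁻¹' (Ioo 0 1) := rfl
  rw [this]
  exact (isOpen_Ioo.preimage (coord_continuous 0)).inter
    (isOpen_Ioo.preimage (coord_continuous 1))

lemma frontier_facts {x : E2} (hx : x ∈ frontier Qset) :
    x 0 ∈ Icc (0:ℝ) 1 ∧ x 1 ∈ Icc (0:ℝ) 1 ∧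
    (x 0 = 0 ∨ x 0 = 1 ∨ x 1 = 0 ∨ x 1 = 1) := by
  have hcl : x ∈ closure Qset := hx.1
  have hni : x ∉ Qset := by
    intro h
    exact hx.2 (by rwa [Q_open.interior_eq])
  have h0 : x 0 ∈ Icc (0:ℝ) 1 := by
    have hsub : closure Qset ⊆ (fun x : E2 => x 0) ⁻¹' (Icc 0 1) :=
      closure_minimal (fun z hz => Ioo_subset_Icc_self hz.1)
        (isClosed_Icc.preimage (coord_continuous 0))
    exact hsub hcl
  have h1 : x 1 ∈ Icc (0:ℝ) 1 := by
    have hsub : closure Qset ⊆ (fun x : E2 => x 1) ⁻¹' (Icc 0 1) :=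
      closure_minimal (fun z hz => Ioo_subset_Icc_self hz.2)
        (isClosed_Icc.preimage (coord_continuous 1))
    exact hsub hcl
  refine ⟨h0, h1, ?_⟩
  by_contra hcon
  push_neg at hcon
  obtain ⟨hne0, hne1, hne2, hne3⟩ := hcon
  apply hni
  constructor
  · exact ⟨lt_of_le_of_ne h0.1 (Ne.symm hne0), lt_of_le_of_ne h0.2 hne1⟩
  · exact ⟨lt_of_le_of_ne h1.1 (Ne.symm hne2), lt_of_le_of_ne h1.2 hne3⟩

lemma boundary_val (n N : ℕ) {x : E2} (hx : x ∈ frontier Qset) :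
    yy n N x = toCLM ((1/2 : ℝ) • (1 : Matrix (Fin 2) (Fin 2) ℝ) +
      (1/2 : ℝ) • Matrix.vecMulVec ![(0:ℝ), 1] ![(0:ℝ), 1]) x := by
  obtain ⟨h0, h1, hor⟩ := frontier_facts hx
  refine PiLp.ext fun i => ?_
  have hco : ∀ i, yy n N x i = (![uu n x, vv n N x] : Fin 2 → ℝ) i := fun _ => rfl
  fin_cases i
  · rw [hco, toCLM_apply, Fin.sum_univ_two]
    show uu n x = _
    rw [uu_boundary n x h0 h1 hor]
    simp [Matrix.add_apply, Matrix.smul_apply, Matrix.one_apply, Matrix.vecMulVec_apply]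
    ring
  · rw [hco, toCLM_apply, Fin.sum_univ_two]
    show vv n N x = _
    rw [vv_boundary n N x hor]
    simp [Matrix.add_apply, Matrix.smul_apply, Matrix.one_apply, Matrix.vecMulVec_apply]
    ring



-- Final measure lemmas
lemma main_A (n N : ℕ) (hn : 2 ≤ n) (hN : 1 ≤ N) (δ : ℝ) (hδn : 1/(n:ℝ) < δ) :
    ENNReal.ofReal (1/2 - δ) <
      volume {x ∈ Qset | frobNorm (Dmat (yy n N) x - 1) < δ} := by
  have hn1 : 1 ≤ n := le_trans (by norm_num) hn
  have npos : (0:ℝ) < n := by exact_mod_cast hn1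
  have hn2 : (2:ℝ) ≤ n := by exact_mod_cast hn
  have hδ : 0 < δ := lt_trans (by positivity) hδn
  set IA := ⋃ k ∈ Finset.Icc (1:ℤ) (n-1),
    Ioo ((k:ℝ)/n - 1/(4*n)) ((k:ℝ)/n + 1/(4*n)) with hIA
  set J := Ioo (1/(4*(n:ℝ))) (1 - 1/(4*n)) with hJdef
  have hsub : {x : E2 | x 0 ∈ IA ∧ x 1 ∈ J}
      ⊆ {x ∈ Qset | frobNorm (Dmat (yy n N) x - 1) < δ} := by
    rintro x ⟨hx0, hx1⟩
    rw [hIA] at hx0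
    simp only [Set.mem_iUnion] at hx0
    obtain ⟨k, hk, hx0⟩ := hx0
    rw [Finset.mem_Icc] at hk
    have hk1 := hk.1
    have hk1' : (1:ℝ) ≤ (k:ℝ) := by exact_mod_cast hk1
    have hk2 : (k:ℝ) ≤ (n:ℝ) - 1 := by
      have h := hk.2
      have : (k:ℝ) ≤ ((n:ℤ) - 1 : ℤ) := by exact_mod_cast h
      push_cast at this
      linarith
    have e1 : (k:ℝ)/n - 1/(4*n) = ((k:ℝ) - 1/4)/n := by field_simp
    have e2 : (k:ℝ)/n + 1/(4*n) = ((k:ℝ) + 1/4)/n := by field_simp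
    have hx0pos : 0 < x 0 := by
      have := hx0.1
      rw [e1] at this
      have h2 : (0:ℝ) < ((k:ℝ) - 1/4)/n := div_pos (by linarith) npos
      linarith
    have hx0lt1 : x 0 < 1 := by
      have := hx0.2
      rw [e2] at this
      have h2 : ((k:ℝ) + 1/4)/n < 1 := by
        rw [_root_.div_lt_one npos]
        linarith
      linarith
    have h14pos : (0:ℝ) < 1/(4*(n:ℝ)) := by positivity
    have h14lt : 1 - 1/(4*(n:ℝ)) < 1 := by linarith
    refine ⟨⟨⟨hx0pos, hx0lt1⟩, ⟨lt_trans h14pos hx1.1, lt_of_lt_of_le hx1.2 (by linarith)⟩⟩, ?_⟩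
    obtain ⟨c, hev⟩ := regionA hn1 k hk1 hk2 hx0 hx1
    rw [dmat_of_eventually hev, sub_self, frobNorm_zero]
    exact hδ
  have hIAm : MeasurableSet IA := by
    apply Finset.measurableSet_biUnion
    intro k _
    exact measurableSet_Ioo
  have hJm : MeasurableSet J := measurableSet_Ioo
  have hvol : volume {x : E2 | x 0 ∈ IA ∧ x 1 ∈ J}
      = ENNReal.ofReal (((n:ℝ) - 1) * (1/(2*n)) * (1 - 1/(2*n))) := by
    rw [vol_R2 _ _ hIAm hJm, hIA, vol_IA n hn1, hJdef, Real.volume_Ioo]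
    have hc : ((n - 1 : ℕ) : ℝ≥0∞) = ENNReal.ofReal ((n:ℝ) - 1) := by
      rw [← ENNReal.ofReal_natCast]
      congr 1
      push_cast [Nat.cast_sub hn1]
      ring
    rw [hc, ← ENNReal.ofReal_mul (by linarith),
      ← ENNReal.ofReal_mul (mul_nonneg (by linarith) (by positivity))]
    congr 1
    have : 1 - 1/(4*(n:ℝ)) - 1/(4*n) = 1 - 1/(2*n) := by field_simp; ring
    rw [this]
  have ha2 : (n:ℝ) * (1/(2*n)) = 1/2 := by field_simp
  have haeq : 1/(n:ℝ) = 2 * (1/(2*n)) := by rw [one_div, one_div, mul_inv]; ring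
  have hd : 2 * (1/(2*(n:ℝ))) < δ := by rw [← haeq]; exact hδn
  have hapos : (0:ℝ) < 1/(2*(n:ℝ)) := by positivity
  have hhalf : 1/(2*(n:ℝ)) ≤ 1/4 := by
    rw [div_le_div_iff₀ (by positivity) (by norm_num)]
    linarith
  have hP : 1/2 - δ < ((n:ℝ) - 1) * (1/(2*n)) * (1 - 1/(2*n)) := by
    nlinarith [sq_nonneg (1/(2*(n:ℝ)))]
  have hPpos : 0 < ((n:ℝ) - 1) * (1/(2*n)) * (1 - 1/(2*n)) := by
    apply _root_.mul_pos (_root_.mul_pos (by linarith) hapos)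
    linarith
  calc ENNReal.ofReal (1/2 - δ)
      < ENNReal.ofReal (((n:ℝ) - 1) * (1/(2*n)) * (1 - 1/(2*n))) :=
        (ENNReal.ofReal_lt_ofReal_iff hPpos).mpr hP
    _ = volume {x : E2 | x 0 ∈ IA ∧ x 1 ∈ J} := hvol.symm
    _ ≤ _ := measure_mono hsub

lemma main_B (n : ℕ) (hn : 2 ≤ n) (δ : ℝ) (hδn : 1/(n:ℝ) < δ) :
    ENNReal.ofReal (1/2 - δ) <
      volume {x ∈ Qset | min (frobNorm (Dmat (yy n (4*n^2)) x))
        (frobNorm (Dmat (yy n (4*n^2)) x -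
          (2:ℝ) • Matrix.vecMulVec ![(0:ℝ), 1] ![(0:ℝ), 1])) < δ} := by
  set N : ℕ := 4*n^2 with hNdef
  have hn1 : 1 ≤ n := le_trans (by norm_num) hn
  have hN1 : 1 ≤ N := by rw [hNdef]; nlinarith [hn1]
  have npos : (0:ℝ) < n := by exact_mod_cast hn1
  have Npos : (0:ℝ) < N := by exact_mod_cast hN1
  have hNr : (N:ℝ) = 4*(n:ℝ)^2 := by rw [hNdef]; push_cast; ring
  have hn2 : (2:ℝ) ≤ n := by exact_mod_cast hn
  have hδ : 0 < δ := lt_trans (by positivity) hδn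
  set IB := ⋃ k ∈ Finset.Icc (0:ℤ) (n-1),
    Ioo ((k:ℝ)/n + 1/(4*n) + 1/N) ((k:ℝ)/n + 3/(4*n) - 1/N) with hIB
  set J := Ioo (1/(4*(n:ℝ))) (1 - 1/(4*n)) with hJdef
  set Z := ⋃ l : ℤ, {x : E2 | x 1 = (l:ℝ)/(2*N)} with hZdef
  have hsub : {x : E2 | x 0 ∈ IB ∧ x 1 ∈ J} \ Z
      ⊆ {x ∈ Qset | min (frobNorm (Dmat (yy n N) x))
        (frobNorm (Dmat (yy n N) x -
          (2:ℝ) • Matrix.vecMulVec ![(0:ℝ), 1] ![(0:ℝ), 1])) < δ} := by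
    rintro x ⟨⟨hx0, hx1⟩, hz⟩
    have hx1' : ∀ l : ℤ, x 1 ≠ (l:ℝ)/(2*N) := by
      intro l hl
      apply hz
      rw [hZdef]
      exact Set.mem_iUnion.mpr ⟨l, hl⟩
    rw [hIB] at hx0
    simp only [Set.mem_iUnion] at hx0
    obtain ⟨k, hk, hx0⟩ := hx0
    rw [Finset.mem_Icc] at hk
    have hk1 := hk.1
    have hk1' : (0:ℝ) ≤ (k:ℝ) := by exact_mod_cast hk1
    have hk2 : (k:ℝ) ≤ (n:ℝ) - 1 := by
      have h := hk.2
      have : (k:ℝ) ≤ ((n:ℤ) - 1 : ℤ) := by exact_mod_cast h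
      push_cast at this
      linarith
    have hNrpos : (0:ℝ) < 1/(N:ℝ) := by positivity
    have e2 : (k:ℝ)/n + 3/(4*n) = ((k:ℝ) + 3/4)/n := by field_simp
    have hx0pos : 0 < x 0 := by
      have := hx0.1
      have h2 : (0:ℝ) ≤ (k:ℝ)/n := by positivity
      have h3 : (0:ℝ) < 1/(4*(n:ℝ)) := by positivity
      linarith
    have hx0lt1 : x 0 < 1 := by
      have h1 := hx0.2
      have h2 : ((k:ℝ) + 3/4)/n < 1 := by
        rw [_root_.div_lt_one npos]
        linarith
      rw [e2] at h1
      linarith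
    have h14pos : (0:ℝ) < 1/(4*(n:ℝ)) := by positivity
    refine ⟨⟨⟨hx0pos, hx0lt1⟩, ⟨lt_trans h14pos hx1.1, lt_of_lt_of_le hx1.2 (by linarith)⟩⟩, ?_⟩
    rcases regionB hn1 hN1 k hk1 hk2 hx0 hx1 hx1' with ⟨c, hev⟩ | ⟨c, hev⟩
    · apply lt_of_le_of_lt (min_le_left _ _)
      rw [dmat_of_eventually hev, frobNorm_zero]
      exact hδ
    · apply lt_of_le_of_lt (min_le_right _ _)
      rw [dmat_of_eventually hev, sub_self, frobNorm_zero]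
      exact hδ
  have hIBm : MeasurableSet IB := by
    apply Finset.measurableSet_biUnion
    intro k _
    exact measurableSet_Ioo
  have hJm : MeasurableSet J := measurableSet_Ioo
  have hvol : volume ({x : E2 | x 0 ∈ IB ∧ x 1 ∈ J} \ Z)
      = ENNReal.ofReal ((1/2 - 1/(2*(n:ℝ))) * (1 - 1/(2*n))) := by
    rw [measure_diff_null (by rw [hZdef]; exact vol_Z N)]
    rw [vol_R2 _ _ hIBm hJm, hIB, vol_IB n N hn1 hN1, hJdef, Real.volume_Ioo]
    have hlen : (0:ℝ) ≤ 1/(2*(n:ℝ)) - 2/N := by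
      rw [hNr, sub_nonneg, div_le_div_iff₀ (by positivity) (by positivity)]
      nlinarith
    have hc : ((n : ℕ) : ℝ≥0∞) = ENNReal.ofReal ((n:ℝ)) := by
      rw [← ENNReal.ofReal_natCast]
    rw [hc, ← ENNReal.ofReal_mul (by linarith), ← ENNReal.ofReal_mul (by positivity)]
    congr 1
    have h1 : 1 - 1/(4*(n:ℝ)) - 1/(4*n) = 1 - 1/(2*n) := by field_simp; ring
    have h2 : (n:ℝ) * (1/(2*n) - 2/N) = 1/2 - 1/(2*n) := by
      rw [hNr]
      field_simp
      ring
    rw [h1, h2]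
  have haeq : 1/(n:ℝ) = 2 * (1/(2*n)) := by rw [one_div, one_div, mul_inv]; ring
  have hd : 2 * (1/(2*(n:ℝ))) < δ := by rw [← haeq]; exact hδn
  have hapos : (0:ℝ) < 1/(2*(n:ℝ)) := by positivity
  have hhalf : 1/(2*(n:ℝ)) ≤ 1/4 := by
    rw [div_le_div_iff₀ (by positivity) (by norm_num)]
    linarith
  have hP : 1/2 - δ < (1/2 - 1/(2*(n:ℝ))) * (1 - 1/(2*n)) := by
    nlinarith [sq_nonneg (1/(2*(n:ℝ)))]
  have hPpos : 0 < (1/2 - 1/(2*(n:ℝ))) * (1 - 1/(2*n)) := by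
    apply _root_.mul_pos <;> linarith
  calc ENNReal.ofReal (1/2 - δ)
      < ENNReal.ofReal ((1/2 - 1/(2*(n:ℝ))) * (1 - 1/(2*n))) :=
        (ENNReal.ofReal_lt_ofReal_iff hPpos).mpr hP
    _ = volume ({x : E2 | x 0 ∈ IB ∧ x 1 ∈ J} \ Z) := hvol.symm
    _ ≤ _ := measure_mono hsub

end DLaux

/-- double laminate. With boundary values `Fx`, `F = ½·1 + ½·e₂⊗e₂`, there are
Lipschitz maps whose gradient is within `δ` of `1` on measure `> 1/2 − δ` and within `δ` of
`{0, 2e₂⊗e₂}` on measure `> 1/2 − δ`. -/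
theorem double_laminate_construction (δ : ℝ) (hδ : 0 < δ) :
    ∃ y : EuclideanSpace ℝ (Fin 2) → EuclideanSpace ℝ (Fin 2),
      (∃ K : ℝ≥0, LipschitzOnWith K y
        (closure {x : EuclideanSpace ℝ (Fin 2) | x 0 ∈ Set.Ioo (0:ℝ) 1 ∧ x 1 ∈ Set.Ioo (0:ℝ) 1})) ∧
      (∀ x ∈ frontier {x : EuclideanSpace ℝ (Fin 2) | x 0 ∈ Set.Ioo (0:ℝ) 1 ∧ x 1 ∈ Set.Ioo (0:ℝ) 1},
        y x = toCLM ((1/2 : ℝ) • (1 : Matrix (Fin 2) (Fin 2) ℝ) +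
          (1/2 : ℝ) • Matrix.vecMulVec ![(0:ℝ), 1] ![(0:ℝ), 1]) x) ∧
      ENNReal.ofReal (1/2 - δ) < volume {x ∈
        {x : EuclideanSpace ℝ (Fin 2) | x 0 ∈ Set.Ioo (0:ℝ) 1 ∧ x 1 ∈ Set.Ioo (0:ℝ) 1} |
        frobNorm (Dmat y x - 1) < δ} ∧
      ENNReal.ofReal (1/2 - δ) < volume {x ∈
        {x : EuclideanSpace ℝ (Fin 2) | x 0 ∈ Set.Ioo (0:ℝ) 1 ∧ x 1 ∈ Set.Ioo (0:ℝ) 1} |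
        min (frobNorm (Dmat y x))
          (frobNorm (Dmat y x - (2:ℝ) • Matrix.vecMulVec ![(0:ℝ), 1] ![(0:ℝ), 1])) < δ} :=  by
  set n : ℕ := ⌈1/δ⌉₊ + 2 with hndef
  have hn : 2 ≤ n := by omega
  have npos : (0:ℝ) < n := by positivity
  have hδn : 1/(n:ℝ) < δ := by
    have h1 : 1/δ ≤ (⌈1/δ⌉₊ : ℝ) := Nat.le_ceil _
    have h2 : ((⌈1/δ⌉₊ : ℕ) : ℝ) < n := by
      rw [hndef]
      push_cast
      linarith
    have h3 : 1/δ < (n:ℝ) := lt_of_le_of_lt h1 h2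
    rw [div_lt_iff₀ npos]
    rw [div_lt_iff₀ hδ] at h3
    linarith
  refine ⟨yy n (4*n^2), ?_, ?_, ?_, ?_⟩
  · obtain ⟨K, hK⟩ := yy_lip n (4*n^2)
    exact ⟨K, hK.lipschitzOnWith⟩
  · intro x hx
    exact boundary_val n (4*n^2) hx
  · have hN1 : 1 ≤ 4*n^2 := by nlinarith [hn]
    exact main_A n (4*n^2) hn hN1 δ hδn
  · exact main_B n hn δ hδn
end
end

section
/- Let p > 1, and in M^{2×2} set A₁ = 0 and A₂ = 1 (the identity), so that rank(A₂ − A₁) = 2. For every γ > 0 there exist a bounded domain Ω ⊆ ℝ² (a 'rooms and passages' domain) and a Lipschitz map y : Ω → ℝ² such that, with K₁ = {A₁}, K₂ = {A₂} and ε = 0: ℒ²(Ω_{1,0}(y)) > 0, ℒ²(Ω_{2,0}(y)) > 0, and ∫_{T₀(y)} (1 + |Dy(x)|^p) dx < γ · min( ℒ²(Ω_{1,0}(y)), ℒ²(Ω_{2,0}(y)) ). (Thus the transition layer estimate fails for general bounded domains, i.e. some connectivity hypothesis on Ω is necessary.) -/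
open MeasureTheory Matrix Pointwise ENNReal

noncomputable section

open Incompat NNReal Bornology

set_option maxHeartbeats 1000000
set_option synthInstance.maxHeartbeats 200000

namespace RoomsAux

open Real Set MeasureTheory

abbrev E := EuclideanSpace ℝ (Fin 2)

noncomputable def phi : ℝ → ℝ := fun t => Real.smoothTransition ((t + 1) / 2)

lemma one_le_top : (1 : WithTop ℕ∞) ≤ ((⊤ : ℕ∞) : WithTop ℕ∞) := by
  exact_mod_cast (le_top : (1 : ℕ∞) ≤ ⊤)

lemma phi_contDiff : ContDiff ℝ ((⊤ : ℕ∞) : WithTop ℕ∞) phi := by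
  have h : ContDiff ℝ ((⊤ : ℕ∞) : WithTop ℕ∞) fun t : ℝ => (t + 1) / 2 :=
    (contDiff_id.add contDiff_const).div_const 2
  exact Real.smoothTransition.contDiff.comp h

lemma phi_diff : Differentiable ℝ phi := phi_contDiff.differentiable (by simp)

lemma deriv_phi_continuous : Continuous (deriv phi) := phi_contDiff.continuous_deriv one_le_top

lemma phi_nonneg (t : ℝ) : 0 ≤ phi t := Real.smoothTransition.nonneg _
lemma phi_le_one (t : ℝ) : phi t ≤ 1 := Real.smoothTransition.le_one _

lemma phi_zero {t : ℝ} (h : t ≤ -1) : phi t = 0 :=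
  Real.smoothTransition.zero_of_nonpos (by linarith)

lemma phi_one {t : ℝ} (h : 1 ≤ t) : phi t = 1 :=
  Real.smoothTransition.one_of_one_le (by linarith)

lemma deriv_phi_left {t : ℝ} (h : t < -1) : deriv phi t = 0 := by
  have he : phi =ᶠ[nhds t] fun _ => (0 : ℝ) := by
    filter_upwards [Iio_mem_nhds h] with s hs
    exact phi_zero hs.le
  rw [he.deriv_eq, deriv_const]

lemma deriv_phi_right {t : ℝ} (h : 1 < t) : deriv phi t = 0 := by
  have he : phi =ᶠ[nhds t] fun _ => (1 : ℝ) := by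
    filter_upwards [Ioi_mem_nhds h] with s hs
    exact phi_one hs.le
  rw [he.deriv_eq, deriv_const]

noncomputable def yf : E → E := fun x => phi (x 0) • x

noncomputable def Dcl (x : E) : E →L[ℝ] E :=
  phi (x 0) • ContinuousLinearMap.id ℝ E +
    (deriv phi (x 0) • (EuclideanSpace.proj (0 : Fin 2) : E →L[ℝ] ℝ)).smulRight x

lemma hasFDerivAt_yf (x : E) : HasFDerivAt yf (Dcl x) x := by
  have hc : HasFDerivAt (fun z : E => phi (z 0))
      (deriv phi (x 0) • (EuclideanSpace.proj (0 : Fin 2) : E →L[ℝ] ℝ)) x := by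
    have h1 : HasDerivAt phi (deriv phi (x 0)) (x 0) := (phi_diff (x 0)).hasDerivAt
    have h2 : HasFDerivAt (fun z : E => z 0)
        (EuclideanSpace.proj (0 : Fin 2) : E →L[ℝ] ℝ) x :=
      (EuclideanSpace.proj (0 : Fin 2) : E →L[ℝ] ℝ).hasFDerivAt
    have := h1.comp_hasFDerivAt x h2
    exact this
  exact hc.smul (hasFDerivAt_id x)

lemma dmat_apply (x : E) (i j : Fin 2) :
    Dmat yf x i j = phi (x 0) * (if i = j then 1 else 0)
      + deriv phi (x 0) * ((if (0 : Fin 2) = j then (1 : ℝ) else 0) * x i) := by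
  show fderiv ℝ yf x (EuclideanSpace.single j 1) i = _
  rw [(hasFDerivAt_yf x).fderiv]
  have hval : (Dcl x) (EuclideanSpace.single j 1)
      = phi (x 0) • (EuclideanSpace.single j (1 : ℝ) : E)
        + (deriv phi (x 0) * (EuclideanSpace.single j (1 : ℝ) 0)) • x := by
    simp [Dcl, smul_smul]
  have happ : (phi (x 0) • (EuclideanSpace.single j (1 : ℝ) : E)
        + (deriv phi (x 0) * (EuclideanSpace.single j (1 : ℝ) 0)) • x) i
      = phi (x 0) * (EuclideanSpace.single j (1 : ℝ) i)
        + (deriv phi (x 0) * (EuclideanSpace.single j (1 : ℝ) 0)) * x i := rfl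
  rw [hval, happ]
  simp only [EuclideanSpace.single_apply]
  split_ifs <;> ring

lemma dmat_left {x : E} (h : x 0 < -1) : Dmat yf x = 0 := by
  ext i j
  rw [dmat_apply, phi_zero h.le, deriv_phi_left h]
  simp

lemma dmat_right {x : E} (h : 1 < x 0) : Dmat yf x = 1 := by
  ext i j
  rw [dmat_apply, phi_one h.le, deriv_phi_right h]
  simp [Matrix.one_apply, eq_comm]

lemma frobNorm_nonneg {m n : ℕ} (A : Matrix (Fin m) (Fin n) ℝ) : 0 ≤ frobNorm A :=
  Real.sqrt_nonneg _

lemma nbhd_singleton {m n : ℕ} (B : Matrix (Fin m) (Fin n) ℝ) :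
    Nbhd {B} (0 : ℝ) = {B} := by
  ext A
  simp only [Nbhd, Set.mem_setOf_eq, Set.mem_singleton_iff, exists_eq_left]
  constructor
  · intro h
    have h0 : frobNorm (A - B) = 0 := le_antisymm h (frobNorm_nonneg _)
    have hS : 0 ≤ ∑ i, ∑ j, ((A - B) i j) ^ 2 :=
      Finset.sum_nonneg fun i _ => Finset.sum_nonneg fun j _ => sq_nonneg _
    have hS0 : ∑ i, ∑ j, ((A - B) i j) ^ 2 = 0 := (Real.sqrt_eq_zero hS).mp h0
    ext i j
    have h1 := (Finset.sum_eq_zero_iff_of_nonneg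
      (fun i _ => Finset.sum_nonneg fun j _ => sq_nonneg ((A - B) i j))).mp hS0 i
      (Finset.mem_univ i)
    have h2 := (Finset.sum_eq_zero_iff_of_nonneg
      (fun j _ => sq_nonneg ((A - B) i j))).mp h1 j (Finset.mem_univ j)
    have h3 : (A - B) i j = 0 := by
      have := (pow_eq_zero_iff two_ne_zero).mp h2
      exact this
    have h4 : A i j - B i j = 0 := by simpa [Matrix.sub_apply] using h3
    linarith
  · rintro rfl
    simp [frobNorm]

lemma coord_continuous (i : Fin 2) : Continuous fun x : E => x i :=
  (EuclideanSpace.proj i : E →L[ℝ] ℝ).continuous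

lemma abs_coord_le_norm (x : E) (i : Fin 2) : |x i| ≤ ‖x‖ := by
  rw [EuclideanSpace.norm_eq, ← Real.sqrt_sq_eq_abs]
  apply Real.sqrt_le_sqrt
  have := Finset.single_le_sum (f := fun j : Fin 2 => ‖x j‖ ^ 2)
    (fun j _ => sq_nonneg _) (Finset.mem_univ i)
  simpa [Real.norm_eq_abs, sq_abs] using this

lemma volume_coord_box {A B : Set ℝ} (hA : MeasurableSet A) (hB : MeasurableSet B) :
    volume {x : E | x 0 ∈ A ∧ x 1 ∈ B} = volume A * volume B := by
  have hmp := EuclideanSpace.volume_preserving_symm_measurableEquiv_toLp (ι := Fin 2)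
  have hmeas : MeasurableSet (Set.univ.pi ![A, B]) := by
    apply MeasurableSet.univ_pi
    intro i
    fin_cases i <;> simpa
  have hset : {x : E | x 0 ∈ A ∧ x 1 ∈ B}
      = (MeasurableEquiv.toLp 2 (Fin 2 → ℝ)).symm ⁻¹' (Set.univ.pi ![A, B]) := by
    ext x
    simp only [Set.mem_setOf_eq, Set.mem_preimage, Set.mem_univ_pi,
      Fin.forall_fin_two]
    rfl
  rw [hset, hmp.measure_preimage hmeas.nullMeasurableSet, volume_pi_pi]
  simp [Fin.prod_univ_two]

def box (a b c d : ℝ) : Set E := {x : E | x 0 ∈ Ioo a b ∧ x 1 ∈ Ioo c d}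

lemma volume_box (a b c d : ℝ) :
    volume (box a b c d) = ENNReal.ofReal (b - a) * ENNReal.ofReal (d - c) := by
  rw [box, volume_coord_box measurableSet_Ioo measurableSet_Ioo,
    Real.volume_Ioo, Real.volume_Ioo]

lemma isOpen_box (a b c d : ℝ) : IsOpen (box a b c d) := by
  have : box a b c d = ((fun x : E => x 0) ⁻¹' Ioo a b) ∩ ((fun x : E => x 1) ⁻¹' Ioo c d) := rfl
  rw [this]
  exact ((isOpen_Ioo.preimage (coord_continuous 0)).inter
    (isOpen_Ioo.preimage (coord_continuous 1)))

lemma convex_box (a b c d : ℝ) : Convex ℝ (box a b c d) := by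
  intro x hx y hy s t hs ht hst
  have h0 : (s • x + t • y) 0 = s * x 0 + t * y 0 := rfl
  have h1 : (s • x + t • y) 1 = s * x 1 + t * y 1 := rfl
  constructor
  · rw [h0]; exact (convex_Ioo a b) hx.1 hy.1 hs ht hst
  · rw [h1]; exact (convex_Ioo c d) hx.2 hy.2 hs ht hst

noncomputable def pt (u v : ℝ) : E := (WithLp.equiv 2 (Fin 2 → ℝ)).symm ![u, v]

@[simp] lemma pt_zero (u v : ℝ) : pt u v 0 = u := rfl
@[simp] lemma pt_one (u v : ℝ) : pt u v 1 = v := rfl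

lemma isConnected_box {a b c d : ℝ} (h1 : a < b) (h2 : c < d) : IsConnected (box a b c d) := by
  refine ⟨⟨pt ((a + b) / 2) ((c + d) / 2),
    Set.mem_Ioo.mpr ⟨?_, ?_⟩, Set.mem_Ioo.mpr ⟨?_, ?_⟩⟩,
    (convex_box a b c d).isPreconnected⟩ <;>
  · first
      | (rw [pt_zero]; linarith)
      | (rw [pt_one]; linarith)

lemma entry00 (x : E) : Dmat yf x 0 0 = phi (x 0) + deriv phi (x 0) * x 0 := by
  rw [dmat_apply]; norm_num

lemma entry01 (x : E) : Dmat yf x 0 1 = 0 := by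
  rw [dmat_apply]; norm_num [Fin.ext_iff]

lemma entry10 (x : E) : Dmat yf x 1 0 = deriv phi (x 0) * x 1 := by
  rw [dmat_apply]; norm_num [Fin.ext_iff]

lemma entry11 (x : E) : Dmat yf x 1 1 = phi (x 0) := by
  rw [dmat_apply]; norm_num [Fin.ext_iff]

lemma frobNorm_dmat_le {M : ℝ} (hM : ∀ t, |deriv phi t| ≤ M) {x : E}
    (h0 : |x 0| ≤ 1) (h1 : |x 1| ≤ 1) : frobNorm (Dmat yf x) ≤ 2 * (M + 1) := by
  have hM0 : 0 ≤ M := le_trans (abs_nonneg _) (hM 0)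
  have ha0 : 0 ≤ phi (x 0) := phi_nonneg _
  have ha1 : phi (x 0) ≤ 1 := phi_le_one _
  have hd := abs_le.mp (hM (x 0))
  have hx0 := abs_le.mp h0
  have hx1 := abs_le.mp h1
  have hsum : ∑ i, ∑ j, (Dmat yf x i j) ^ 2 ≤ (2 * (M + 1)) ^ 2 := by
    rw [Fin.sum_univ_two, Fin.sum_univ_two, Fin.sum_univ_two,
      entry00, entry01, entry10, entry11]
    have hdabs : |deriv phi (x 0) * x 0| ≤ M := by
      rw [abs_mul]
      calc |deriv phi (x 0)| * |x 0| ≤ M * 1 :=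
            mul_le_mul (hM _) h0 (abs_nonneg _) hM0
        _ = M := mul_one M
    have habs : (phi (x 0) + deriv phi (x 0) * x 0) ^ 2 ≤ (1 + M) ^ 2 := by
      have hb := abs_le.mp hdabs
      exact sq_le_sq' (by linarith) (by linarith)
    have hsq2 : (deriv phi (x 0) * x 1) ^ 2 ≤ M ^ 2 := by
      have : |deriv phi (x 0) * x 1| ≤ M := by
        rw [abs_mul]
        calc |deriv phi (x 0)| * |x 1| ≤ M * 1 :=
              mul_le_mul (hM _) h1 (abs_nonneg _) hM0
          _ = M := mul_one M
      have hb := abs_le.mp this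
      exact sq_le_sq' (by linarith) (by linarith)
    nlinarith [habs, hsq2, ha0, ha1, hM0]
  have : frobNorm (Dmat yf x) ≤ Real.sqrt ((2 * (M + 1)) ^ 2) := Real.sqrt_le_sqrt hsum
  rwa [Real.sqrt_sq (by linarith)] at this

lemma norm_Dcl_le {M : ℝ} (hM : ∀ t, |deriv phi t| ≤ M) {x : E} (hx : ‖x‖ ≤ 10) :
    ‖Dcl x‖ ≤ 1 + M * 10 := by
  have hM0 : 0 ≤ M := le_trans (abs_nonneg _) (hM 0)
  have hproj : ‖(EuclideanSpace.proj (0 : Fin 2) : E →L[ℝ] ℝ)‖ ≤ 1 := by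
    refine ContinuousLinearMap.opNorm_le_bound _ zero_le_one fun z => ?_
    rw [one_mul]
    simpa [Real.norm_eq_abs] using abs_coord_le_norm z 0
  have hphi1 : ‖phi (x 0)‖ ≤ 1 := by
    rw [Real.norm_eq_abs, abs_of_nonneg (phi_nonneg _)]; exact phi_le_one _
  have h1 : ‖phi (x 0) • ContinuousLinearMap.id ℝ E‖ ≤ 1 := by
    refine ContinuousLinearMap.opNorm_le_bound _ zero_le_one fun z => ?_
    rw [ContinuousLinearMap.smul_apply, ContinuousLinearMap.id_apply, one_mul]
    have hle := norm_smul_le (phi (x 0)) z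
    nlinarith [norm_nonneg z]
  have h2 : ‖(deriv phi (x 0) • (EuclideanSpace.proj (0 : Fin 2) : E →L[ℝ] ℝ)).smulRight x‖
      ≤ M * 10 := by
    rw [ContinuousLinearMap.norm_smulRight_apply]
    have hd : ‖deriv phi (x 0)‖ ≤ M := by rw [Real.norm_eq_abs]; exact hM _
    have hsp : ‖deriv phi (x 0) • (EuclideanSpace.proj (0 : Fin 2) : E →L[ℝ] ℝ)‖ ≤ M := by
      refine ContinuousLinearMap.opNorm_le_bound _ hM0 fun z => ?_
      rw [ContinuousLinearMap.smul_apply]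
      have hle := norm_smul_le (deriv phi (x 0))
        ((EuclideanSpace.proj (0 : Fin 2) : E →L[ℝ] ℝ) z)
      have hz : ‖(EuclideanSpace.proj (0 : Fin 2) : E →L[ℝ] ℝ) z‖ ≤ ‖z‖ := by
        simpa [Real.norm_eq_abs] using abs_coord_le_norm z 0
      nlinarith [norm_nonneg z, norm_nonneg ((EuclideanSpace.proj (0 : Fin 2) : E →L[ℝ] ℝ) z),
        abs_nonneg (deriv phi (x 0))]
    have := mul_le_mul hsp hx (norm_nonneg x) hM0
    linarith
  have hadd : ‖Dcl x‖ ≤ ‖phi (x 0) • ContinuousLinearMap.id ℝ E‖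
      + ‖(deriv phi (x 0) • (EuclideanSpace.proj (0 : Fin 2) : E →L[ℝ] ℝ)).smulRight x‖ := by
    simp only [Dcl]
    exact norm_add_le _ _
  linarith

lemma lipschitz_yf {M : ℝ} (hM : ∀ t, |deriv phi t| ≤ M) :
    LipschitzOnWith (Real.toNNReal (1 + M * 10)) yf (Metric.ball (0 : E) 10) := by
  apply Convex.lipschitzOnWith_of_nnnorm_fderiv_le
    (fun x _ => (hasFDerivAt_yf x).differentiableAt)
    (fun x hx => ?_) (convex_ball 0 10)
  have hx' : ‖x‖ ≤ 10 := by
    rw [Metric.mem_ball, dist_zero_right] at hx; exact hx.le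
  rw [← NNReal.coe_le_coe, coe_nnnorm, Real.coe_toNNReal']
  rw [(hasFDerivAt_yf x).fderiv]
  exact le_max_of_le_left (norm_Dcl_le hM hx')

lemma norm_lt_of_coord_le {x : E} (h0 : |x 0| ≤ 2) (h1 : |x 1| ≤ 2) : ‖x‖ < 10 := by
  rw [EuclideanSpace.norm_eq]
  have hsum : ∑ i, ‖x i‖ ^ 2 ≤ 8 := by
    rw [Fin.sum_univ_two, Real.norm_eq_abs, Real.norm_eq_abs]
    nlinarith [abs_nonneg (x 0), abs_nonneg (x 1)]
  have h8 : Real.sqrt (∑ i, ‖x i‖ ^ 2) ≤ Real.sqrt 8 := Real.sqrt_le_sqrt hsum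
  have h100 : Real.sqrt 8 < Real.sqrt 100 := Real.sqrt_lt_sqrt (by norm_num) (by norm_num)
  rw [show (100 : ℝ) = 10 ^ 2 by norm_num, Real.sqrt_sq (by norm_num : (0:ℝ) ≤ 10)] at h100
  linarith

lemma dmat_cont (i j : Fin 2) : Continuous fun x : E => Dmat yf x i j := by
  have heq : (fun x : E => Dmat yf x i j) = fun x : E =>
      phi (x 0) * (if i = j then 1 else 0)
        + deriv phi (x 0) * ((if (0 : Fin 2) = j then (1 : ℝ) else 0) * x i) :=
    funext fun x => dmat_apply x i j
  rw [heq]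
  exact ((phi_contDiff.continuous.comp (coord_continuous 0)).mul continuous_const).add
    ((deriv_phi_continuous.comp (coord_continuous 0)).mul
      (continuous_const.mul (coord_continuous i)))

lemma integrand_cont (p : ℝ) (hp : 0 ≤ p) :
    Continuous fun x : E => 1 + frobNorm (Dmat yf x) ^ p := by
  have h1 : Continuous fun x : E => frobNorm (Dmat yf x) := by
    have heq : (fun x : E => frobNorm (Dmat yf x))
        = fun x : E => Real.sqrt (∑ i, ∑ j, (Dmat yf x i j) ^ 2) := rfl
    rw [heq]
    exact Real.continuous_sqrt.comp (continuous_finset_sum _ fun i _ =>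
      continuous_finset_sum _ fun j _ => (dmat_cont i j).pow 2)
  exact continuous_const.add ((Real.continuous_rpow_const hp).comp h1)

end RoomsAux


open RoomsAux in
/-- rooms and passages. For `A₁ = 0`, `A₂ = 1` and any `γ > 0` there is a
bounded domain `Ω ⊆ ℝ²` and a Lipschitz map `y` on it violating the transition layer estimate
with constant `γ`. -/
theorem rooms_and_passages_counterexample (p : ℝ) (hp : 1 < p) (γ : ℝ) (hγ : 0 < γ) :
    ∃ Ω : Set (EuclideanSpace ℝ (Fin 2)),
      IsOpen Ω ∧ IsConnected Ω ∧ IsBounded Ω ∧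
      ∃ y : EuclideanSpace ℝ (Fin 2) → EuclideanSpace ℝ (Fin 2), ∃ K : ℝ≥0,
        LipschitzOnWith K y Ω ∧
        0 < volume (phaseSet Ω y {(0 : Matrix (Fin 2) (Fin 2) ℝ)} 0) ∧
        0 < volume (phaseSet Ω y {(1 : Matrix (Fin 2) (Fin 2) ℝ)} 0) ∧
        (∫ x in transLayer Ω y {(0 : Matrix (Fin 2) (Fin 2) ℝ)} {(1 : Matrix (Fin 2) (Fin 2) ℝ)} 0,
            (1 + frobNorm (Dmat y x) ^ p)) <
          γ * min (volume (phaseSet Ω y {(0 : Matrix (Fin 2) (Fin 2) ℝ)} 0)).toReal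
                  (volume (phaseSet Ω y {(1 : Matrix (Fin 2) (Fin 2) ℝ)} 0)).toReal := by
  classical
  obtain ⟨M₀, hM₀⟩ := (isCompact_Icc (a := (-1:ℝ)) (b := 1)).exists_bound_of_continuousOn
    deriv_phi_continuous.continuousOn
  set M : ℝ := max M₀ 0 with hMdef
  have hM : ∀ t, |deriv phi t| ≤ M := by
    intro t
    by_cases ht : t ∈ Set.Icc (-1:ℝ) 1
    · exact le_trans (by simpa [Real.norm_eq_abs] using hM₀ t ht) (le_max_left _ _)
    · rw [Set.mem_Icc, not_and_or, not_le, not_le] at ht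
      have hz : deriv phi t = 0 := by
        rcases ht with h | h
        · exact deriv_phi_left (by linarith)
        · exact deriv_phi_right (by linarith)
      rw [hz, abs_zero]
      exact le_max_right _ _
  have hM0 : 0 ≤ M := le_max_right _ _
  set C : ℝ := 2 * (M + 1) with hCdef
  have hC0 : 0 < C := by rw [hCdef]; linarith
  set B : ℝ := 1 + C ^ p with hBdef
  have hB1 : 1 ≤ B := le_add_of_nonneg_right (Real.rpow_nonneg hC0.le p)
  have hB0 : 0 < B := lt_of_lt_of_le one_pos hB1
  set δ : ℝ := min (1/2) (γ / (4 * B)) with hδdef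
  have hδ0 : 0 < δ := lt_min (by norm_num) (div_pos hγ (by linarith))
  have hδhalf : δ ≤ 1/2 := min_le_left _ _
  have hδ1 : δ ≤ 1 := by linarith
  have hδγ : 4 * B * δ ≤ γ := by
    have h := min_le_right (1/2 : ℝ) (γ / (4 * B))
    have h4B : 0 < 4 * B := by linarith
    have := mul_le_mul_of_nonneg_left h h4B.le
    calc 4 * B * δ ≤ 4 * B * (γ / (4 * B)) := this
      _ = γ := by field_simp
  set Om : Set E := box (-2) 2 (-δ) δ ∪ box (-2) (-1) (-1) 1 ∪ box 1 2 (-1) 1 with hOm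
  have hOmOpen : IsOpen Om :=
    ((isOpen_box _ _ _ _).union (isOpen_box _ _ _ _)).union (isOpen_box _ _ _ _)
  have hmem1s : pt (-(3/2) : ℝ) 0 ∈ box (-2 : ℝ) 2 (-δ) δ := by
    simp only [box, Set.mem_setOf_eq, pt_zero, pt_one, Set.mem_Ioo]
    refine ⟨⟨by norm_num, by norm_num⟩, by linarith, by linarith⟩
  have hmem1r : pt (-(3/2) : ℝ) 0 ∈ box (-2 : ℝ) (-1) (-1) 1 := by
    simp only [box, Set.mem_setOf_eq, pt_zero, pt_one, Set.mem_Ioo]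
    norm_num
  have hmem2s : pt ((3/2) : ℝ) 0 ∈ box (-2 : ℝ) 2 (-δ) δ := by
    simp only [box, Set.mem_setOf_eq, pt_zero, pt_one, Set.mem_Ioo]
    refine ⟨⟨by norm_num, by norm_num⟩, by linarith, by linarith⟩
  have hmem2r : pt ((3/2) : ℝ) 0 ∈ box (1 : ℝ) 2 (-1) 1 := by
    simp only [box, Set.mem_setOf_eq, pt_zero, pt_one, Set.mem_Ioo]
    norm_num
  have hConn : IsConnected Om := by
    have h12 : IsConnected (box (-2 : ℝ) 2 (-δ) δ ∪ box (-2 : ℝ) (-1) (-1) 1) :=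
      IsConnected.union ⟨pt (-(3/2) : ℝ) 0, hmem1s, hmem1r⟩
        (isConnected_box (by norm_num) (by linarith))
        (isConnected_box (by norm_num) (by norm_num))
    exact IsConnected.union ⟨pt ((3/2) : ℝ) 0, Set.mem_union_left _ hmem2s, hmem2r⟩
      h12 (isConnected_box (by norm_num) (by norm_num))
  have hOmBall : Om ⊆ Metric.ball (0 : E) 10 := by
    intro x hx
    have hco : |x 0| ≤ 2 ∧ |x 1| ≤ 2 := by
      rcases hx with (h | h) | h <;>
      · obtain ⟨h0, h1⟩ := h
        rw [Set.mem_Ioo] at h0 h1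
        exact ⟨abs_le.mpr ⟨by linarith, by linarith⟩, abs_le.mpr ⟨by linarith, by linarith⟩⟩
    rw [Metric.mem_ball, dist_zero_right]
    exact norm_lt_of_coord_le hco.1 hco.2
  have hBounded : IsBounded Om := Metric.isBounded_ball.subset hOmBall
  -- phase sets
  have hsub0 : box (-2 : ℝ) (-1) (-1) 1 ⊆ phaseSet Om yf {(0 : Matrix (Fin 2) (Fin 2) ℝ)} 0 := by
    intro x hx
    refine ⟨Set.mem_union_left _ (Set.mem_union_right _ hx), ?_⟩
    rw [nbhd_singleton]
    exact dmat_left (Set.mem_Ioo.mp hx.1).2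
  have hsub1 : box (1 : ℝ) 2 (-1) 1 ⊆ phaseSet Om yf {(1 : Matrix (Fin 2) (Fin 2) ℝ)} 0 := by
    intro x hx
    refine ⟨Set.mem_union_right _ hx, ?_⟩
    rw [nbhd_singleton]
    exact dmat_right (Set.mem_Ioo.mp hx.1).1
  have hroomvol0 : volume (box (-2 : ℝ) (-1) (-1) 1) = ENNReal.ofReal 2 := by
    rw [volume_box, show ((-1 : ℝ) - (-2)) = 1 by norm_num,
      show ((1 : ℝ) - (-1)) = 2 by norm_num, ENNReal.ofReal_one, one_mul]
  have hroomvol1 : volume (box (1 : ℝ) 2 (-1) 1) = ENNReal.ofReal 2 := by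
    rw [volume_box, show ((2 : ℝ) - 1) = 1 by norm_num,
      show ((1 : ℝ) - (-1)) = 2 by norm_num, ENNReal.ofReal_one, one_mul]
  have hv0 : ENNReal.ofReal 2 ≤ volume (phaseSet Om yf {(0 : Matrix (Fin 2) (Fin 2) ℝ)} 0) := by
    rw [← hroomvol0]; exact measure_mono hsub0
  have hv1 : ENNReal.ofReal 2 ≤ volume (phaseSet Om yf {(1 : Matrix (Fin 2) (Fin 2) ℝ)} 0) := by
    rw [← hroomvol1]; exact measure_mono hsub1
  have hball : volume (Metric.ball (0 : E) 10) < ⊤ := measure_ball_lt_top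
  have hfin0 : volume (phaseSet Om yf {(0 : Matrix (Fin 2) (Fin 2) ℝ)} 0) ≠ ⊤ :=
    ne_of_lt (lt_of_le_of_lt (measure_mono fun x hx => hOmBall hx.1) hball)
  have hfin1 : volume (phaseSet Om yf {(1 : Matrix (Fin 2) (Fin 2) ℝ)} 0) ≠ ⊤ :=
    ne_of_lt (lt_of_le_of_lt (measure_mono fun x hx => hOmBall hx.1) hball)
  have hpos0 : 0 < volume (phaseSet Om yf {(0 : Matrix (Fin 2) (Fin 2) ℝ)} 0) :=
    lt_of_lt_of_le (ENNReal.ofReal_pos.mpr two_pos) hv0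
  have hpos1 : 0 < volume (phaseSet Om yf {(1 : Matrix (Fin 2) (Fin 2) ℝ)} 0) :=
    lt_of_lt_of_le (ENNReal.ofReal_pos.mpr two_pos) hv1
  have ht0 : 2 ≤ (volume (phaseSet Om yf {(0 : Matrix (Fin 2) (Fin 2) ℝ)} 0)).toReal := by
    have := ENNReal.toReal_mono hfin0 hv0
    rwa [ENNReal.toReal_ofReal (by norm_num : (0:ℝ) ≤ 2)] at this
  have ht1 : 2 ≤ (volume (phaseSet Om yf {(1 : Matrix (Fin 2) (Fin 2) ℝ)} 0)).toReal := by
    have := ENNReal.toReal_mono hfin1 hv1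
    rwa [ENNReal.toReal_ofReal (by norm_num : (0:ℝ) ≤ 2)] at this
  -- transition layer
  set T : Set E := transLayer Om yf {(0 : Matrix (Fin 2) (Fin 2) ℝ)}
    {(1 : Matrix (Fin 2) (Fin 2) ℝ)} 0 with hTdef
  have hTsub : T ⊆ {x : E | x 0 ∈ Set.Icc (-1 : ℝ) 1 ∧ x 1 ∈ Set.Ioo (-δ) δ} := by
    intro x hx
    obtain ⟨hxO, hxD⟩ := hx
    rw [nbhd_singleton, nbhd_singleton] at hxD
    have hleft : ¬ x 0 < -1 := fun h =>
      hxD (Set.mem_union_left _ (by rw [dmat_left h]; exact Set.mem_singleton _))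
    have hright : ¬ 1 < x 0 := fun h =>
      hxD (Set.mem_union_right _ (by rw [dmat_right h]; exact Set.mem_singleton _))
    push_neg at hleft hright
    rcases hxO with (h | h) | h
    · exact ⟨Set.mem_Icc.mpr ⟨hleft, hright⟩, h.2⟩
    · exact absurd (Set.mem_Ioo.mp h.1).2 (not_lt.mpr hleft)
    · exact absurd (Set.mem_Ioo.mp h.1).1 (not_lt.mpr hright)
  have hTvol : volume T ≤ ENNReal.ofReal (4 * δ) := by
    refine le_trans (measure_mono hTsub) ?_
    rw [volume_coord_box measurableSet_Icc measurableSet_Ioo, Real.volume_Icc,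
      Real.volume_Ioo, show ((1 : ℝ) - (-1)) = 2 by norm_num,
      show (δ - (-δ)) = 2 * δ by ring, ← ENNReal.ofReal_mul (by norm_num : (0:ℝ) ≤ 2)]
    exact le_of_eq (by congr 1; ring)
  have hTfin : volume T < ⊤ := lt_of_le_of_lt hTvol ENNReal.ofReal_lt_top
  have hbound : ∀ x ∈ T, ‖1 + frobNorm (Dmat yf x) ^ p‖ ≤ B := by
    intro x hx
    obtain ⟨hx0, hx1⟩ := hTsub hx
    rw [Set.mem_Icc] at hx0
    rw [Set.mem_Ioo] at hx1
    have h0 : |x 0| ≤ 1 := abs_le.mpr ⟨hx0.1, hx0.2⟩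
    have h1 : |x 1| ≤ 1 := abs_le.mpr ⟨by linarith, by linarith⟩
    have hfr : frobNorm (Dmat yf x) ≤ C := frobNorm_dmat_le hM h0 h1
    have hfr0 : 0 ≤ frobNorm (Dmat yf x) := frobNorm_nonneg _
    have hpow : frobNorm (Dmat yf x) ^ p ≤ C ^ p := Real.rpow_le_rpow hfr0 hfr (by linarith)
    have hpos : 0 ≤ 1 + frobNorm (Dmat yf x) ^ p :=
      add_nonneg zero_le_one (Real.rpow_nonneg hfr0 p)
    rw [Real.norm_eq_abs, abs_of_nonneg hpos, hBdef]
    linarith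
  have hAESM : AEStronglyMeasurable (fun x : E => 1 + frobNorm (Dmat yf x) ^ p)
      (volume.restrict T) :=
    (integrand_cont p (by linarith)).aestronglyMeasurable.restrict
  have hint : (∫ x in T, (1 + frobNorm (Dmat yf x) ^ p)) ≤ B * (volume T).toReal := by
    refine le_trans (le_abs_self _) ?_
    rw [← Real.norm_eq_abs]
    exact norm_setIntegral_le_of_norm_le_const hTfin hbound
  have htoReal : (volume T).toReal ≤ 4 * δ := by
    have := ENNReal.toReal_mono ENNReal.ofReal_ne_top hTvol
    rwa [ENNReal.toReal_ofReal (by positivity)] at this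
  have hmin : 2 ≤ min (volume (phaseSet Om yf {(0 : Matrix (Fin 2) (Fin 2) ℝ)} 0)).toReal
      (volume (phaseSet Om yf {(1 : Matrix (Fin 2) (Fin 2) ℝ)} 0)).toReal := le_min ht0 ht1
  refine ⟨Om, hOmOpen, hConn, hBounded, yf, Real.toNNReal (1 + M * 10),
    (lipschitz_yf hM).mono hOmBall, hpos0, hpos1, ?_⟩
  have hBT : B * (volume T).toReal ≤ B * (4 * δ) :=
    mul_le_mul_of_nonneg_left htoReal hB0.le
  have hfinal : B * (4 * δ) ≤ γ := by nlinarith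
  have hlast : γ < γ * min (volume (phaseSet Om yf {(0 : Matrix (Fin 2) (Fin 2) ℝ)} 0)).toReal
      (volume (phaseSet Om yf {(1 : Matrix (Fin 2) (Fin 2) ℝ)} 0)).toReal := by
    nlinarith
  calc (∫ x in T, (1 + frobNorm (Dmat yf x) ^ p))
      ≤ B * (volume T).toReal := hint
    _ ≤ B * (4 * δ) := hBT
    _ ≤ γ := hfinal
    _ < _ := hlast
end
end
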